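/- arXiv:1807.00607 — 6 statements merged into one kernel-verified Lean document; each statement's English description precedes it below -/
import Mathlib

section
/- If (a_i)_{i∈ℕ} is a sequence of real numbers such that ∑ |a_i| converges, then the infinite product ∏_{i} (1 + a_i) equals the sum over all finite subsets J of ℕ of ∏_{i∈J} a_i, and both converge absolutely. -/
open Filter Topology

theorem stmt_0 (a : ℕ → ℝ) (h : Summable fun i => |a i|) :
    Summable (fun J : Finset ℕ => |∏ i ∈ J, a i|) ∧
    Tendsto (fun n => ∏ i ∈ Finset.range n, (1 + a i)) atTop
      (𝓝 (∑' J : Finset ℕ, ∏ i ∈ J, a i)) := by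
  have habs : ∀ J : Finset ℕ, |∏ i ∈ J, a i| = ∏ i ∈ J, |a i| := by
    intro J; rw [Finset.abs_prod]
  -- partial products as sums over powersets
  have key : ∀ (b : ℕ → ℝ) (n : ℕ),
      ∏ i ∈ Finset.range n, (1 + b i) =
        ∑ J ∈ (Finset.range n).powerset, ∏ i ∈ J, b i := by
    intro b n
    have := Finset.prod_add (fun i => b i) (fun _ => (1 : ℝ)) (Finset.range n)
    simp only [Finset.prod_const_one, mul_one] at this
    rw [← this]
    apply Finset.prod_congr rfl
    intro i _; ring
  -- bound on partial products of (1 + |a i|)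
  have hbound : ∀ n : ℕ, ∏ i ∈ Finset.range n, (1 + |a i|) ≤ Real.exp (∑' i, |a i|) := by
    intro n
    calc ∏ i ∈ Finset.range n, (1 + |a i|) ≤ ∏ i ∈ Finset.range n, Real.exp (|a i|) := by
          apply Finset.prod_le_prod
          · intro i _; positivity
          · intro i _
            have := Real.add_one_le_exp (|a i|)
            linarith
      _ = Real.exp (∑ i ∈ Finset.range n, |a i|) := by rw [Real.exp_sum]
      _ ≤ Real.exp (∑' i, |a i|) := by
          apply Real.exp_le_exp.2
          exact Summable.sum_le_tsum _ (fun i _ => abs_nonneg _) h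
  have hsummable : Summable (fun J : Finset ℕ => |∏ i ∈ J, a i|) := by
    apply summable_of_sum_le (c := Real.exp (∑' i, |a i|))
      (fun J => abs_nonneg _)
    intro s
    set n : ℕ := s.sup (fun J => J.sup id) + 1 with hn
    have hsub : s ⊆ (Finset.range n).powerset := by
      intro J hJ
      rw [Finset.mem_powerset]
      intro i hi
      rw [Finset.mem_range]
      calc i = id i := rfl
        _ ≤ J.sup id := Finset.le_sup hi
        _ ≤ s.sup (fun J => J.sup id) := Finset.le_sup hJ
        _ < n := by omega
    calc ∑ J ∈ s, |∏ i ∈ J, a i|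
        ≤ ∑ J ∈ (Finset.range n).powerset, |∏ i ∈ J, a i| :=
          Finset.sum_le_sum_of_subset_of_nonneg hsub (fun _ _ _ => abs_nonneg _)
      _ = ∑ J ∈ (Finset.range n).powerset, ∏ i ∈ J, |a i| := by
          exact Finset.sum_congr rfl (fun J _ => habs J)
      _ = ∏ i ∈ Finset.range n, (1 + |a i|) := (key (fun i => |a i|) n).symm
      _ ≤ Real.exp (∑' i, |a i|) := hbound n
  refine ⟨hsummable, ?_⟩
  have hsum : HasSum (fun J : Finset ℕ => ∏ i ∈ J, a i) (∑' J : Finset ℕ, ∏ i ∈ J, a i) :=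
    (Summable.of_abs hsummable).hasSum
  have hmono : Tendsto (fun n => (Finset.range n).powerset) atTop atTop := by
    apply tendsto_atTop_finset_of_monotone
    · intro m n hmn
      exact Finset.powerset_mono.2 (Finset.range_subset_range.2 hmn)
    · intro J
      refine ⟨J.sup id + 1, ?_⟩
      rw [Finset.mem_powerset]
      intro i hi
      rw [Finset.mem_range]
      have : i ≤ J.sup id := Finset.le_sup (f := id) hi
      omega
  have := (hsum.comp hmono)
  simpa only [Function.comp_def, ← key] using this
end

section
/- Let (Ω, 𝔄, P) be a probability space and (A_i)_{i∈ℕ} a sequence of pairwise independent events with ∑_i P(A_i) = ∞. Then P(limsup A_i) = 1, i.e., the probability that infinitely many of the A_i occur is 1. -/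
open MeasureTheory Filter

open scoped ENNReal

theorem stmt_5 {Ω : Type*} [MeasurableSpace Ω] (μ : Measure Ω)
    [IsProbabilityMeasure μ] (A : ℕ → Set Ω) (hA : ∀ i, MeasurableSet (A i))
    (hind : Pairwise fun i j => μ (A i ∩ A j) = μ (A i) * μ (A j))
    (hsum : ∑' i, μ (A i) = ⊤) :
    μ (⋂ n, ⋃ i, ⋃ _ : n ≤ i, A i) = 1 := by
  have hT : ∀ n, MeasurableSet (⋃ i, ⋃ _ : n ≤ i, A i) := fun n =>
    MeasurableSet.iUnion fun i => MeasurableSet.iUnion fun _ => hA i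
  have key : ∀ n, μ (⋃ i, ⋃ _ : n ≤ i, A i) = 1 := by
    intro n
    set T := ⋃ i, ⋃ _ : n ≤ i, A i with hTdef
    have hfin : ∀ N, (∑ i ∈ Finset.Ico n N, μ (A i)) ≠ ⊤ := by
      intro N
      exact (ENNReal.sum_lt_top.2 fun i _ => (measure_lt_top μ (A i))).ne
    -- Chung–Erdős-type inequality
    have main : ∀ N : ℕ,
        (∑ i ∈ Finset.Ico n N, μ (A i)) * (∑ i ∈ Finset.Ico n N, μ (A i)) ≤
          ((∑ i ∈ Finset.Ico n N, μ (A i)) +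
            (∑ i ∈ Finset.Ico n N, μ (A i)) * (∑ i ∈ Finset.Ico n N, μ (A i))) * μ T := by
      intro N
      set s := Finset.Ico n N with hs
      set m := ∑ i ∈ s, μ (A i) with hm
      set f : Ω → ℝ≥0∞ := fun ω => ∑ i ∈ s, (A i).indicator 1 ω with hf
      have hmeas : ∀ i : ℕ, Measurable ((A i).indicator (1 : Ω → ℝ≥0∞)) := fun i =>
        measurable_one.indicator (hA i)
      have hfm : Measurable f := Finset.measurable_sum _ fun i _ => hmeas i
      have hint : ∫⁻ ω, f ω ∂μ = m := by
        rw [hf, lintegral_finset_sum _ fun i _ => hmeas i]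
        simp_rw [lintegral_indicator_one (hA _)]
        exact hm.symm
      have hsq : ∫⁻ ω, f ω * f ω ∂μ ≤ m + m * m := by
        have hexp : ∀ ω, f ω * f ω = ∑ i ∈ s, ∑ j ∈ s, (A i ∩ A j).indicator 1 ω := by
          intro ω
          rw [hf, Finset.sum_mul_sum]
          refine Finset.sum_congr rfl fun i _ => Finset.sum_congr rfl fun j _ => ?_
          rw [← Set.inter_indicator_mul]
          simp only [Pi.one_apply, mul_one]
          rfl
        calc ∫⁻ ω, f ω * f ω ∂μ
            = ∑ i ∈ s, ∑ j ∈ s, μ (A i ∩ A j) := by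
              simp_rw [hexp]
              rw [lintegral_finset_sum _ fun i _ =>
                Finset.measurable_sum _ fun j _ => measurable_one.indicator ((hA i).inter (hA j))]
              refine Finset.sum_congr rfl fun i _ => ?_
              rw [lintegral_finset_sum _ fun j _ => measurable_one.indicator ((hA i).inter (hA j))]
              simp_rw [lintegral_indicator_one ((hA _).inter (hA _))]
          _ ≤ ∑ i ∈ s, (μ (A i) + μ (A i) * m) := by
              refine Finset.sum_le_sum fun i hi => ?_
              rw [← Finset.add_sum_erase _ _ hi, Set.inter_self]
              gcongr
              calc ∑ j ∈ s.erase i, μ (A i ∩ A j)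
                  = ∑ j ∈ s.erase i, μ (A i) * μ (A j) := by
                    refine Finset.sum_congr rfl fun j hj => ?_
                    exact hind (Finset.ne_of_mem_erase hj).symm
                _ = μ (A i) * ∑ j ∈ s.erase i, μ (A j) := by rw [Finset.mul_sum]
                _ ≤ μ (A i) * m := by
                    gcongr
                    exact Finset.sum_le_sum_of_subset (Finset.erase_subset _ _)
          _ = m + m * m := by
              rw [Finset.sum_add_distrib, ← Finset.sum_mul]
      -- Cauchy–Schwarz
      have hCS : m ≤ (∫⁻ ω, f ω * f ω ∂μ) ^ (1 / 2 : ℝ) * (μ T) ^ (1 / 2 : ℝ) := by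
        set g : Ω → ℝ≥0∞ := T.indicator (1 : Ω → ℝ≥0∞) with hg
        have hfT : ∀ ω, f ω = (f * g) ω := by
          intro ω
          by_cases hω : ω ∈ T
          · simp [hg, Pi.mul_apply, Set.indicator_of_mem hω]
          · have hz : f ω = 0 := by
              refine Finset.sum_eq_zero fun i hi => ?_
              have : ω ∉ A i := fun h =>
                hω (Set.mem_iUnion.2 ⟨i, Set.mem_iUnion.2 ⟨(Finset.mem_Ico.1 hi).1, h⟩⟩)
              simp [Set.indicator_of_notMem this]
            simp [Pi.mul_apply, hz]
        have h22 : (2 : ℝ).HolderConjugate 2 := Real.HolderConjugate.two_two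
        calc m = ∫⁻ ω, (f * g) ω ∂μ := by
              rw [← hint]; exact lintegral_congr hfT
          _ ≤ (∫⁻ ω, f ω ^ (2 : ℝ) ∂μ) ^ (1 / 2 : ℝ)
              * (∫⁻ ω, g ω ^ (2 : ℝ) ∂μ) ^ (1 / 2 : ℝ) :=
              ENNReal.lintegral_mul_le_Lp_mul_Lq μ h22 hfm.aemeasurable
                (measurable_one.indicator (hT n)).aemeasurable
          _ = (∫⁻ ω, f ω * f ω ∂μ) ^ (1 / 2 : ℝ) * (μ T) ^ (1 / 2 : ℝ) := by
              congr 1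
              · congr 1
                refine lintegral_congr fun ω => ?_
                rw [show (2 : ℝ) = ((2 : ℕ) : ℝ) by norm_num, ENNReal.rpow_natCast, sq]
              · congr 1
                rw [← lintegral_indicator_one (hT n)]
                refine lintegral_congr fun ω => ?_
                by_cases hω : ω ∈ T <;>
                  simp [hg, hω, ENNReal.zero_rpow_of_pos, Set.indicator_of_mem,
                    Set.indicator_of_notMem, ← hTdef]
      have hhalf : ∀ x : ℝ≥0∞, x ^ (1 / 2 : ℝ) * x ^ (1 / 2 : ℝ) = x := by
        intro x
        rw [← ENNReal.rpow_add_of_nonneg _ _ (by norm_num) (by norm_num)]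
        norm_num
      calc m * m ≤ ((∫⁻ ω, f ω * f ω ∂μ) ^ (1 / 2 : ℝ) * (μ T) ^ (1 / 2 : ℝ))
            * ((∫⁻ ω, f ω * f ω ∂μ) ^ (1 / 2 : ℝ) * (μ T) ^ (1 / 2 : ℝ)) := by
            exact mul_le_mul' hCS hCS
        _ = (∫⁻ ω, f ω * f ω ∂μ) * μ T := by
            rw [mul_mul_mul_comm, hhalf, hhalf]
        _ ≤ (m + m * m) * μ T := by gcongr
    -- conclude μ T = 1
    refine le_antisymm prob_le_one ?_
    by_contra hlt
    push_neg at hlt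
    set c := (μ T).toReal with hc
    have hc1 : c < 1 := by
      rw [hc]
      exact (ENNReal.toReal_lt_toReal (measure_ne_top μ T) ENNReal.one_ne_top).2
        (by simpa using hlt)
    have hc0 : 0 ≤ c := ENNReal.toReal_nonneg
    -- find a large partial tail sum
    obtain ⟨N, hN⟩ : ∃ N, c / (1 - c) + 1 ≤ (∑ i ∈ Finset.Ico n N, μ (A i)).toReal := by
      set C : ℝ≥0∞ := ENNReal.ofReal (c / (1 - c) + 1) + ∑ i ∈ Finset.range n, μ (A i) with hC
      have hCfin : C ≠ ⊤ := by
        rw [hC]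
        exact ENNReal.add_ne_top.2 ⟨ENNReal.ofReal_ne_top,
          (ENNReal.sum_lt_top.2 fun i _ => measure_lt_top μ (A i)).ne⟩
      have : C < ⨆ t : Finset ℕ, ∑ i ∈ t, μ (A i) := by
        rw [← ENNReal.tsum_eq_iSup_sum, hsum]
        exact hCfin.lt_top
      obtain ⟨t, ht⟩ := lt_iSup_iff.1 this
      obtain ⟨N', hN'⟩ := t.exists_nat_subset_range
      set N := max N' n with hNdef
      have h1 : C < ∑ i ∈ Finset.range N, μ (A i) :=
        ht.trans_le (Finset.sum_le_sum_of_subset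
          (hN'.trans (Finset.range_subset_range.2 (le_max_left _ _))))
      have h2 : ∑ i ∈ Finset.range N, μ (A i)
          = ∑ i ∈ Finset.range n, μ (A i) + ∑ i ∈ Finset.Ico n N, μ (A i) := by
        rw [Finset.range_eq_Ico, Finset.range_eq_Ico,
          Finset.sum_Ico_consecutive _ (Nat.zero_le n) (le_max_right N' n)]
      refine ⟨N, ?_⟩
      rw [← ENNReal.ofReal_le_iff_le_toReal (hfin N)]
      have h3 : ENNReal.ofReal (c / (1 - c) + 1) + ∑ i ∈ Finset.range n, μ (A i)
          ≤ ∑ i ∈ Finset.Ico n N, μ (A i) + ∑ i ∈ Finset.range n, μ (A i) := by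
        rw [← hC]
        calc C ≤ ∑ i ∈ Finset.range N, μ (A i) := h1.le
          _ = _ := by rw [h2, add_comm]
      exact ENNReal.le_of_add_le_add_right
        (ENNReal.sum_lt_top.2 fun i _ => measure_lt_top μ (A i)).ne h3
    set a := (∑ i ∈ Finset.Ico n N, μ (A i)).toReal with ha
    have hmain := main N
    have hreal : a * a ≤ (a + a * a) * c := by
      have h1 : ((∑ i ∈ Finset.Ico n N, μ (A i)) * (∑ i ∈ Finset.Ico n N, μ (A i))).toReal
          ≤ (((∑ i ∈ Finset.Ico n N, μ (A i)) +
              (∑ i ∈ Finset.Ico n N, μ (A i)) * (∑ i ∈ Finset.Ico n N, μ (A i))) * μ T).toReal :=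
        ENNReal.toReal_mono (by
          exact ENNReal.mul_ne_top (ENNReal.add_ne_top.2 ⟨hfin N,
            ENNReal.mul_ne_top (hfin N) (hfin N)⟩) (measure_ne_top μ T)) hmain
      rwa [ENNReal.toReal_mul, ENNReal.toReal_mul, ENNReal.toReal_add (hfin N)
        (ENNReal.mul_ne_top (hfin N) (hfin N)), ENNReal.toReal_mul] at h1
    have h1c : 0 < 1 - c := by linarith
    have ha0 : 0 < a := by
      have : 0 ≤ c / (1 - c) := div_nonneg hc0 h1c.le
      linarith
    have hle : a ≤ c / (1 - c) := by
      rw [le_div_iff₀ h1c]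
      nlinarith
    have : c / (1 - c) + 1 ≤ c / (1 - c) := hN.trans hle
    linarith
  rw [← prob_compl_eq_zero_iff (MeasurableSet.iInter hT)]
  rw [Set.compl_iInter]
  refine measure_iUnion_null fun n => ?_
  rw [prob_compl_eq_zero_iff (hT n)]
  exact key n
end

section
/- Let F be a countable set and (p_f)_{f∈F} a family of reals in [0,1] with ∑_{f∈F} p_f < ∞. Define, for each finite subset D ⊆ F, P({D}) = (∏_{f∈D} p_f) · (∏_{f∈F∖D} (1 − p_f)). Then the sum of P({D}) over all finite subsets D of F equals 1. -/
open Filter Topology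

private lemma hasProd_of_Icc {β : Type*} (g : β → ℝ) (h0 : ∀ b, 0 ≤ g b) (h1 : ∀ b, g b ≤ 1) :
    HasProd g (⨅ s : Finset β, ∏ b ∈ s, g b) := by
  classical
  have hanti : Antitone (fun s : Finset β => ∏ b ∈ s, g b) := by
    intro s t hst
    calc ∏ b ∈ t, g b = (∏ b ∈ t \ s, g b) * ∏ b ∈ s, g b := (Finset.prod_sdiff hst).symm
      _ ≤ 1 * ∏ b ∈ s, g b := by
          exact mul_le_mul_of_nonneg_right
            (Finset.prod_le_one (fun b _ => h0 b) (fun b _ => h1 b))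
            (Finset.prod_nonneg fun b _ => h0 b)
      _ = ∏ b ∈ s, g b := one_mul _
  have hbdd : BddBelow (Set.range fun s : Finset β => ∏ b ∈ s, g b) := by
    refine ⟨0, ?_⟩
    rintro x ⟨s, rfl⟩
    exact Finset.prod_nonneg fun b _ => h0 b
  exact tendsto_atTop_ciInf hanti hbdd

private lemma tprod_Icc_nonneg {β : Type*} (g : β → ℝ) (h0 : ∀ b, 0 ≤ g b) (h1 : ∀ b, g b ≤ 1) :
    0 ≤ ∏' b, g b :=
  ge_of_tendsto' ((hasProd_of_Icc g h0 h1).multipliable.hasProd)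
    (fun s => Finset.prod_nonneg fun b _ => h0 b)

private lemma tprod_Icc_le_one {β : Type*} (g : β → ℝ) (h0 : ∀ b, 0 ≤ g b) (h1 : ∀ b, g b ≤ 1) :
    ∏' b, g b ≤ 1 :=
  le_of_tendsto' ((hasProd_of_Icc g h0 h1).multipliable.hasProd)
    (fun s => Finset.prod_le_one (fun b _ => h0 b) (fun b _ => h1 b))

private lemma one_sub_sum_le_prod {β : Type*} (x : β → ℝ) (h0 : ∀ b, 0 ≤ x b) (h1 : ∀ b, x b ≤ 1)
    (t : Finset β) : 1 - ∑ b ∈ t, x b ≤ ∏ b ∈ t, (1 - x b) := by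
  classical
  induction t using Finset.induction_on with
  | empty => simp
  | insert _ _ ha ih =>
    rename_i a t
    rw [Finset.sum_insert ha, Finset.prod_insert ha]
    have hs : 0 ≤ ∑ b ∈ t, x b := Finset.sum_nonneg fun b _ => h0 b
    nlinarith [mul_le_mul_of_nonneg_left ih (by linarith [h1 a] : (0:ℝ) ≤ 1 - x a),
      mul_nonneg (h0 a) hs]

set_option maxHeartbeats 1000000 in
theorem stmt_7 {α : Type*} [Countable α] (p : α → ℝ)
    (hp : ∀ f, 0 ≤ p f ∧ p f ≤ 1) (hsum : Summable p) :
    HasSum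
      (fun D : Finset α =>
        (∏ f ∈ D, p f) * ∏' f : {f : α // f ∉ D}, (1 - p f.1)) 1 := by
  classical
  set g : α → ℝ := fun f => 1 - p f with hgdef
  have hg0 : ∀ f, 0 ≤ g f := fun f => by simp only [hgdef]; linarith [(hp f).2]
  have hg1 : ∀ f, g f ≤ 1 := fun f => by simp only [hgdef]; linarith [(hp f).1]
  set P : Finset α → ℝ := fun D =>
    (∏ f ∈ D, p f) * ∏' f : {f : α // f ∉ D}, (1 - p f.1) with hPdef
  set T : Finset α → ℝ := fun D => ∏' f : {f : α // f ∉ D}, g f.1 with hTdef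
  have hPT : ∀ D, P D = (∏ f ∈ D, p f) * T D := fun D => rfl
  -- HasProd on complement subtypes
  have hsub : ∀ s : Finset α, HasProd (fun f : {f : α // f ∉ s} => g f.1) (T s) :=
    fun s => (hasProd_of_Icc (fun f : {f : α // f ∉ s} => g f.1)
      (fun b => hg0 b.1) (fun b => hg1 b.1)).multipliable.hasProd
  have hT0 : ∀ s, 0 ≤ T s := fun s =>
    tprod_Icc_nonneg (fun f : {f : α // f ∉ s} => g f.1)
      (fun b => hg0 b.1) (fun b => hg1 b.1)
  have hT1 : ∀ s, T s ≤ 1 := fun s =>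
    tprod_Icc_le_one (fun f : {f : α // f ∉ s} => g f.1)
      (fun b => hg0 b.1) (fun b => hg1 b.1)
  -- key decomposition
  have key : ∀ s : Finset α, ∀ D : Finset α, D ⊆ s →
      T D = (∏ f ∈ s \ D, g f) * T s := by
    intro s D hDs
    set h : α → ℝ := Set.mulIndicator ((↑D : Set α)ᶜ) g with hhdef
    have hTD : HasProd h (T D) :=
      hasProd_subtype_iff_mulIndicator.1 (hsub D)
    have hcompl : HasProd (fun f : ↥((↑s : Set α)ᶜ) => h f.1) (T s) := by
      have he : (fun f : ↥((↑s : Set α)ᶜ) => h f.1)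
          = fun f : ↥((↑s : Set α)ᶜ) => g f.1 := by
        funext f
        exact Set.mulIndicator_of_mem
          (Set.mem_compl_iff _ _ |>.2 fun hf => (Set.mem_compl_iff _ _ |>.1 f.2)
            (Finset.mem_coe.2 (hDs (Finset.mem_coe.1 hf)))) g
      rw [he]
      exact hsub s
    have hfin : HasProd (fun f : (↑s : Finset α) => h f.1) (∏ f ∈ s \ D, g f) := by
      have : ∏ f ∈ s, h f = ∏ f ∈ s \ D, g f := by
        rw [← Finset.prod_sdiff hDs]
        have h1 : ∏ f ∈ D, h f = 1 :=
          Finset.prod_eq_one fun f hf =>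
            Set.mulIndicator_of_notMem (Set.notMem_compl_iff.2 (Finset.mem_coe.2 hf)) g
        have h2 : ∏ f ∈ s \ D, h f = ∏ f ∈ s \ D, g f :=
          Finset.prod_congr rfl fun f hf =>
            Set.mulIndicator_of_mem (Set.mem_compl_iff _ _ |>.2 fun hc => (Finset.mem_sdiff.1 hf).2 (Finset.mem_coe.1 hc)) g
        rw [h1, h2, mul_one]
      exact this ▸ s.hasProd h
    exact hTD.unique (hfin.mul_compl hcompl)
  -- summability of P
  have hQ0 : ∀ D : Finset α, 0 ≤ ∏ f ∈ D, p f :=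
    fun D => Finset.prod_nonneg fun f _ => (hp f).1
  have hP0 : ∀ D, 0 ≤ P D := fun D => mul_nonneg (hQ0 D) (hT0 D)
  have hPle : ∀ D, P D ≤ ∏ f ∈ D, p f := fun D => by
    rw [hPT D]
    exact mul_le_of_le_one_right (hQ0 D) (hT1 D)
  have hQsum : Summable fun D : Finset α => ∏ f ∈ D, p f := by
    apply summable_of_sum_le (c := Real.exp (∑' f, p f)) hQ0
    intro u
    calc ∑ D ∈ u, ∏ f ∈ D, p f
        ≤ ∑ D ∈ (u.sup id).powerset, ∏ f ∈ D, p f := by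
          apply Finset.sum_le_sum_of_subset_of_nonneg
          · intro D hD
            exact Finset.mem_powerset.2 (Finset.le_sup (f := id) hD)
          · intro D _ _; exact hQ0 D
      _ = ∏ f ∈ u.sup id, (p f + 1) := by
          rw [Finset.prod_add]
          simp
      _ ≤ ∏ f ∈ u.sup id, Real.exp (p f) := by
          apply Finset.prod_le_prod
          · intro f _; linarith [(hp f).1]
          · intro f _; linarith [Real.add_one_le_exp (p f)]
      _ = Real.exp (∑ f ∈ u.sup id, p f) := (Real.exp_sum _ _).symm
      _ ≤ Real.exp (∑' f, p f) :=
          Real.exp_le_exp.2 (Summable.sum_le_tsum _ (fun f _ => (hp f).1) hsum)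
  have hPsum : Summable P := hQsum.of_nonneg_of_le hP0 hPle
  have hS : HasSum P (∑' D, P D) := hPsum.hasSum
  -- powerset tends to atTop
  have hpow : Tendsto (fun s : Finset α => s.powerset) atTop atTop := by
    apply tendsto_atTop_atTop.2
    intro u
    refine ⟨u.sup id, fun s hs => ?_⟩
    intro D hD
    exact Finset.mem_powerset.2 ((Finset.le_sup (f := id) hD).trans hs)
  have h1 : Tendsto (fun s : Finset α => ∑ D ∈ s.powerset, P D) atTop (𝓝 (∑' D, P D)) :=
    hS.comp hpow
  have h2 : ∀ s : Finset α, ∑ D ∈ s.powerset, P D = T s := by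
    intro s
    have : ∀ D ∈ s.powerset, P D = ((∏ f ∈ D, p f) * ∏ f ∈ s \ D, g f) * T s := by
      intro D hD
      rw [hPT D, key s D (Finset.mem_powerset.1 hD), mul_assoc]
    rw [Finset.sum_congr rfl this, ← Finset.sum_mul, ← Finset.prod_add p g s]
    have : ∏ f ∈ s, (p f + g f) = 1 := by
      apply Finset.prod_eq_one
      intro f _
      simp [hgdef]
    rw [this, one_mul]
  -- T s → 1
  have h3 : Tendsto T atTop (𝓝 1) := by
    have hlow : ∀ s : Finset α, 1 - ∑' f : {f : α // f ∉ s}, p f.1 ≤ T s := by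
      intro s
      apply ge_of_tendsto' (hsub s)
      intro t
      calc (1 : ℝ) - ∑' f : {f : α // f ∉ s}, p f.1
          ≤ 1 - ∑ b ∈ t, p b.1 := by
            have : ∑ b ∈ t, p b.1 ≤ ∑' f : {f : α // f ∉ s}, p f.1 :=
              Summable.sum_le_tsum t (fun b _ => (hp b.1).1) (hsum.subtype _)
            linarith
        _ ≤ ∏ b ∈ t, (1 - p b.1) :=
            one_sub_sum_le_prod _ (fun b => (hp b.1).1) (fun b => (hp b.1).2) t
    have htail : Tendsto (fun s : Finset α => ∑' f : {f : α // f ∉ s}, p f.1) atTop (𝓝 0) :=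
      tendsto_tsum_compl_atTop_zero p
    have hlowlim : Tendsto (fun s : Finset α => 1 - ∑' f : {f : α // f ∉ s}, p f.1)
        atTop (𝓝 1) := by
      have := htail.const_sub 1
      simpa using this
    exact tendsto_of_tendsto_of_tendsto_of_le_of_le hlowlim tendsto_const_nhds hlow hT1
  have h4 : Tendsto (fun s : Finset α => ∑ D ∈ s.powerset, P D) atTop (𝓝 1) := by
    rw [show (fun s : Finset α => ∑ D ∈ s.powerset, P D) = T from funext h2]
    exact h3
  have : (∑' D, P D) = 1 := tendsto_nhds_unique h1 h4
  exact this ▸ hS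
end

section
/- Given a countable fact set F and a family (p_f)_{f∈F} of reals in [0,1], there exists a probability measure P on the set of finite subsets of F making the events E_f = {D : f ∈ D} independent with P(E_f) = p_f, if and only if ∑_{f∈F} p_f < ∞. -/
open MeasureTheory Set
open scoped ENNReal NNReal

namespace Stmt10Aux

variable {α : Type*}

noncomputable def ph (p : α → ℝ) (f : α) : ℝ≥0∞ := ENNReal.ofReal (p f)
noncomputable def qh (p : α → ℝ) (f : α) : ℝ≥0∞ := ENNReal.ofReal (1 - p f)

noncomputable def Q (p : α → ℝ) (T : Set α) : ℝ≥0∞ :=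
  ⨅ (S : Finset α) (_ : ↑S ⊆ T), ∏ f ∈ S, qh p f

noncomputable def w (p : α → ℝ) (D : Finset α) : ℝ≥0∞ :=
  (∏ f ∈ D, ph p f) * Q p ((↑D : Set α))ᶜ

variable {p : α → ℝ} (hp : ∀ f, 0 ≤ p f ∧ p f ≤ 1)
include hp

lemma ph_le_one (f : α) : ph p f ≤ 1 := ENNReal.ofReal_le_one.2 (hp f).2
lemma qh_le_one (f : α) : qh p f ≤ 1 := ENNReal.ofReal_le_one.2 (by linarith [(hp f).1])
omit hp in
lemma ph_ne_top (f : α) : ph p f ≠ ∞ := ENNReal.ofReal_ne_top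
lemma ph_add_qh (f : α) : ph p f + qh p f = 1 := by
  rw [ph, qh, ← ENNReal.ofReal_add (hp f).1 (by linarith [(hp f).2])]
  norm_num

lemma prod_ph_le_one (S : Finset α) : ∏ f ∈ S, ph p f ≤ 1 :=
  Finset.prod_le_one (fun _ _ => zero_le) (fun f _ => ph_le_one hp f)
lemma prod_qh_le_one (S : Finset α) : ∏ f ∈ S, qh p f ≤ 1 :=
  Finset.prod_le_one (fun _ _ => zero_le) (fun f _ => qh_le_one hp f)

omit hp in
lemma Q_le_prod {S : Finset α} {T : Set α} (h : ↑S ⊆ T) : Q p T ≤ ∏ f ∈ S, qh p f :=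
  iInf₂_le S h

omit hp in
lemma Q_le_one (T : Set α) : Q p T ≤ 1 := by
  simpa using Q_le_prod (S := (∅:Finset α)) (T := T) (by simp)

lemma prod_mul_Q_le (A : Finset α) (B : Set α) :
    (∏ f ∈ A, qh p f) * Q p B ≤ Q p (↑A ∪ B) := by
  classical
  refine le_iInf₂ fun T hT => ?_
  have h1 : Q p B ≤ ∏ f ∈ T \ A, qh p f :=
    Q_le_prod (by intro x hx; simp only [Finset.coe_sdiff, Set.mem_diff] at hx
                  rcases hT (by exact_mod_cast hx.1) with h | h
                  · exact absurd h (by exact_mod_cast hx.2)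
                  · exact h)
  calc (∏ f ∈ A, qh p f) * Q p B ≤ (∏ f ∈ A, qh p f) * ∏ f ∈ T \ A, qh p f :=
        mul_le_mul_right h1 _
    _ = ∏ f ∈ A ∪ T, qh p f := by rw [← Finset.prod_union Finset.disjoint_sdiff,
        Finset.union_sdiff_self_eq_union]
    _ = (∏ f ∈ (A ∪ T) \ T, qh p f) * ∏ f ∈ T, qh p f :=
        (Finset.prod_sdiff Finset.subset_union_right).symm
    _ ≤ 1 * ∏ f ∈ T, qh p f := mul_le_mul_left (prod_qh_le_one hp _) _
    _ = ∏ f ∈ T, qh p f := one_mul _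

lemma weier (S : Finset α) : 1 ≤ ∏ f ∈ S, qh p f + ∑ f ∈ S, ph p f := by
  classical
  induction S using Finset.induction_on with
  | empty => simp
  | @insert a S ha ih =>
    rw [Finset.prod_insert ha, Finset.sum_insert ha]
    calc (1 : ℝ≥0∞) ≤ ∏ f ∈ S, qh p f + ∑ f ∈ S, ph p f := ih
      _ = (ph p a + qh p a) * ∏ f ∈ S, qh p f + ∑ f ∈ S, ph p f := by
          rw [ph_add_qh hp, one_mul]
      _ = ph p a * ∏ f ∈ S, qh p f + (qh p a * ∏ f ∈ S, qh p f + ∑ f ∈ S, ph p f) := by ring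
      _ ≤ ph p a * 1 + (qh p a * ∏ f ∈ S, qh p f + ∑ f ∈ S, ph p f) := by
          gcongr; exact prod_qh_le_one hp _
      _ = qh p a * ∏ f ∈ S, qh p f + (ph p a + ∑ f ∈ S, ph p f) := by ring

lemma Q_weier (T : Set α) :
    1 - (∑' f, T.indicator (ph p) f) ≤ Q p T := by
  refine le_iInf₂ fun S hS => ?_
  rw [tsub_le_iff_right]
  calc (1:ℝ≥0∞) ≤ ∏ f ∈ S, qh p f + ∑ f ∈ S, ph p f := weier hp S
    _ ≤ ∏ f ∈ S, qh p f + ∑' f, T.indicator (ph p) f := by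
        gcongr
        calc ∑ f ∈ S, ph p f = ∑ f ∈ S, T.indicator (ph p) f :=
              Finset.sum_congr rfl (fun f hf => (indicator_of_mem (hS hf) _).symm)
          _ ≤ _ := ENNReal.sum_le_tsum S


lemma key_fin (G S : Finset α) (hGS : G ⊆ S) [DecidableEq α] [DecidablePred (G ⊆ ·)] :
    ∑ D ∈ S.powerset.filter (G ⊆ ·), (∏ f ∈ D, ph p f) * ∏ f ∈ S \ D, qh p f
      = ∏ f ∈ G, ph p f := by
  have key : ∀ D ∈ S.powerset.filter (G ⊆ ·), (∏ f ∈ D, ph p f) * ∏ f ∈ S \ D, qh p f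
      = (∏ f ∈ G, ph p f) * ((∏ f ∈ D \ G, ph p f) * ∏ f ∈ (S \ G) \ (D \ G), qh p f) := by
    intro D hD
    rw [Finset.mem_filter, Finset.mem_powerset] at hD
    obtain ⟨hDS, hGD⟩ := hD
    have h1 : S \ D = (S \ G) \ (D \ G) := by
      ext x
      simp only [Finset.mem_sdiff]
      constructor
      · rintro ⟨hxS, hxD⟩; exact ⟨⟨hxS, fun h => hxD (hGD h)⟩, fun h => hxD h.1⟩
      · rintro ⟨⟨hxS, hxG⟩, h⟩
        exact ⟨hxS, fun hxD => h ⟨hxD, hxG⟩⟩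
    rw [h1, ← mul_assoc, ← Finset.prod_union (Finset.disjoint_sdiff)]
    congr 2
    exact (Finset.union_sdiff_of_subset hGD).symm
  rw [Finset.sum_congr rfl key, ← Finset.mul_sum]
  have h2 : ∑ D ∈ S.powerset.filter (G ⊆ ·),
      ((∏ f ∈ D \ G, ph p f) * ∏ f ∈ (S \ G) \ (D \ G), qh p f)
      = ∑ T ∈ (S \ G).powerset, ((∏ f ∈ T, ph p f) * ∏ f ∈ (S \ G) \ T, qh p f) := by
    refine Finset.sum_nbij' (fun D => D \ G) (fun T => G ∪ T) ?_ ?_ ?_ ?_ ?_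
    · intro D hD
      rw [Finset.mem_filter, Finset.mem_powerset] at hD
      rw [Finset.mem_powerset]
      exact Finset.sdiff_subset_sdiff hD.1 le_rfl
    · intro T hT
      rw [Finset.mem_powerset] at hT
      rw [Finset.mem_filter, Finset.mem_powerset]
      refine ⟨Finset.union_subset hGS (hT.trans (Finset.sdiff_subset)), Finset.subset_union_left⟩
    · intro D hD
      rw [Finset.mem_filter, Finset.mem_powerset] at hD
      exact Finset.union_sdiff_of_subset hD.2
    · intro T hT
      rw [Finset.mem_powerset] at hT
      apply Finset.union_sdiff_cancel_left
      exact Finset.disjoint_left.2 fun x hxG hxT => (Finset.mem_sdiff.1 (hT hxT)).2 hxG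
    · intro D hD; rfl
  rw [h2, ← Finset.prod_add]
  have h3 : ∀ f ∈ S \ G, ph p f + qh p f = 1 := fun f _ => ph_add_qh hp f
  rw [Finset.prod_congr rfl h3, Finset.prod_const_one, mul_one]

lemma w_le (D S : Finset α) (hDS : D ⊆ S) [DecidableEq α] :
    w p D ≤ (∏ f ∈ D, ph p f) * ∏ f ∈ S \ D, qh p f := by
  refine mul_le_mul_right (Q_le_prod ?_) _
  intro x hx
  simp only [Finset.coe_sdiff, Set.mem_diff] at hx
  simpa using hx.2

lemma w_ge (D S : Finset α) (hDS : D ⊆ S) [DecidableEq α] :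
    ((∏ f ∈ D, ph p f) * ∏ f ∈ S \ D, qh p f) * Q p ((↑S : Set α))ᶜ ≤ w p D := by
  rw [mul_assoc]
  refine mul_le_mul_right ?_ _
  have hset : (↑(S \ D) : Set α) ∪ ((↑S : Set α))ᶜ = ((↑D : Set α))ᶜ := by
    ext x
    simp only [Finset.coe_sdiff, Set.mem_union, Set.mem_diff, Set.mem_compl_iff,
      Finset.mem_coe]
    constructor
    · rintro (⟨_, h⟩ | h) hD
      · exact h hD
      · exact h (hDS hD)
    · intro h
      by_cases hS : x ∈ S
      · exact Or.inl ⟨hS, h⟩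
      · exact Or.inr hS
  calc (∏ f ∈ S \ D, qh p f) * Q p ((↑S : Set α))ᶜ
      ≤ Q p ((↑(S \ D) : Set α) ∪ ((↑S : Set α))ᶜ) := prod_mul_Q_le hp _ _
    _ = Q p ((↑D : Set α))ᶜ := by rw [hset]

omit hp in
lemma tsum_split (S : Finset α) (g : α → ℝ≥0∞) :
    ∑ f ∈ S, g f + ∑' f, ((↑S : Set α))ᶜ.indicator g f = ∑' f, g f := by
  have h1 : ∑' f, g f = ∑' f, (((↑S : Set α).indicator g) f + (((↑S : Set α))ᶜ.indicator g) f) := by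
    congr 1
    ext f
    rw [← Pi.add_apply, Set.indicator_self_add_compl]
  rw [h1, ENNReal.tsum_add]
  congr 1
  rw [← tsum_subtype]
  exact (Finset.tsum_subtype S g).symm


lemma summable_iff_ne_top : Summable p ↔ ∑' f, ph p f ≠ ∞ := by
  rw [← NNReal.summable_mk (fun f => (hp f).1)]
  refine ENNReal.tsum_coe_ne_top_iff_summable.symm.trans ?_
  refine Iff.of_eq (congrArg (· ≠ ∞) (tsum_congr fun f => ?_))
  exact (ENNReal.ofReal_eq_coe_nnreal _).symm

lemma tsum_w_le (G : Finset α) :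
    ∑' D : Finset α, {D : Finset α | ∀ f ∈ G, f ∈ D}.indicator (w p) D ≤ ∏ f ∈ G, ph p f := by
  classical
  rw [ENNReal.tsum_eq_iSup_sum]
  refine iSup_le fun 𝒟 => ?_
  have h1 : ∑ D ∈ 𝒟, {D : Finset α | ∀ f ∈ G, f ∈ D}.indicator (w p) D
      = ∑ D ∈ 𝒟.filter (G ⊆ ·), w p D := by
    rw [Finset.sum_filter]
    refine Finset.sum_congr rfl fun D _ => ?_
    by_cases h : G ⊆ D
    · rw [if_pos h, Set.indicator_of_mem (by simpa [Finset.subset_iff] using h)]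
    · rw [if_neg h, Set.indicator_of_notMem (by simpa [Finset.subset_iff] using h)]
  rw [h1]
  set S : Finset α := G ∪ 𝒟.sup id with hS
  have hsub : 𝒟.filter (G ⊆ ·) ⊆ S.powerset.filter (G ⊆ ·) := by
    intro D hD
    rw [Finset.mem_filter] at hD ⊢
    refine ⟨Finset.mem_powerset.2 ?_, hD.2⟩
    exact (Finset.le_sup (f := id) hD.1).trans Finset.subset_union_right
  calc ∑ D ∈ 𝒟.filter (G ⊆ ·), w p D
      ≤ ∑ D ∈ 𝒟.filter (G ⊆ ·), (∏ f ∈ D, ph p f) * ∏ f ∈ S \ D, qh p f := by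
        refine Finset.sum_le_sum fun D hD => ?_
        rw [Finset.mem_filter] at hD
        exact w_le hp D S ((Finset.le_sup (f := id) hD.1).trans Finset.subset_union_right)
    _ ≤ ∑ D ∈ S.powerset.filter (G ⊆ ·), (∏ f ∈ D, ph p f) * ∏ f ∈ S \ D, qh p f :=
        Finset.sum_le_sum_of_subset hsub
    _ = ∏ f ∈ G, ph p f := key_fin hp G S Finset.subset_union_left

lemma tsum_w (hs : Summable p) (G : Finset α) :
    ∑' D : Finset α, {D : Finset α | ∀ f ∈ G, f ∈ D}.indicator (w p) D = ∏ f ∈ G, ph p f := by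
  classical
  refine le_antisymm (tsum_w_le hp G) ?_
  set L := ∑' D : Finset α, {D : Finset α | ∀ f ∈ G, f ∈ D}.indicator (w p) D with hL
  refine ENNReal.le_of_forall_pos_le_add fun ε hε hLt => ?_
  have htop : ∑' f, ph p f ≠ ∞ := (summable_iff_ne_top hp).1 hs
  -- find S ⊇ G with small tail
  obtain ⟨S, hGS, htail⟩ : ∃ S : Finset α, G ⊆ S ∧
      ∑' f, (((↑S : Set α))ᶜ).indicator (ph p) f ≤ (ε : ℝ≥0∞) := by
    by_cases hc : ∑' f, ph p f ≤ (ε : ℝ≥0∞)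
    · refine ⟨G, le_rfl, le_trans ?_ hc⟩
      rw [← tsum_split G (ph p)]
      exact le_add_self
    · push_neg at hc
      have h1 : (∑' f, ph p f) - ε < ∑' f, ph p f :=
        ENNReal.sub_lt_self htop (((ENNReal.coe_pos.2 hε).trans hc).ne') (by simpa using hε.ne')
      rw [ENNReal.tsum_eq_iSup_sum] at h1
      obtain ⟨S₀, hS₀⟩ := lt_iSup_iff.1 ((by rwa [ENNReal.tsum_eq_iSup_sum] at * ) : (∑' f, ph p f) - ε < ⨆ s : Finset α, ∑ f ∈ s, ph p f)
      refine ⟨G ∪ S₀, Finset.subset_union_left, ?_⟩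
      by_contra hcon
      push_neg at hcon
      have hsum : ∑ f ∈ G ∪ S₀, ph p f ≤ ∑' f, ph p f := by
        rw [← tsum_split (G ∪ S₀) (ph p)]; exact le_add_right le_rfl
      have hfin : ∑ f ∈ G ∪ S₀, ph p f ≠ ∞ := ne_top_of_le_ne_top htop hsum
      have h2 : (∑' f, ph p f) - ε < ∑ f ∈ G ∪ S₀, ph p f :=
        lt_of_lt_of_le hS₀ (Finset.sum_le_sum_of_subset Finset.subset_union_right)
      have h3 : ∑' f, ph p f < ∑ f ∈ G ∪ S₀, ph p f + ε := by
        rwa [← ENNReal.sub_lt_iff_lt_right (by simp) hc.le]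
      have h4 : ∑ f ∈ G ∪ S₀, ph p f + ε < ∑' f, ph p f := by
        calc ∑ f ∈ G ∪ S₀, ph p f + ε
            < ∑ f ∈ G ∪ S₀, ph p f + ∑' f, (((↑(G ∪ S₀) : Set α))ᶜ).indicator (ph p) f := by
              exact ENNReal.add_lt_add_left hfin hcon
          _ = ∑' f, ph p f := tsum_split _ _
      exact absurd (h3.trans h4) (lt_irrefl _)
  -- main chain
  have hQ : 1 ≤ Q p (((↑S : Set α))ᶜ) + (ε : ℝ≥0∞) := by
    calc (1:ℝ≥0∞) ≤ (1 - ∑' f, (((↑S : Set α))ᶜ).indicator (ph p) f)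
            + ∑' f, (((↑S : Set α))ᶜ).indicator (ph p) f := le_tsub_add
      _ ≤ Q p (((↑S : Set α))ᶜ) + ∑' f, (((↑S : Set α))ᶜ).indicator (ph p) f :=
          add_le_add_left (Q_weier hp _) _
      _ ≤ _ := add_le_add le_rfl htail
  have hmain : (∏ f ∈ G, ph p f) * Q p (((↑S : Set α))ᶜ) ≤ L := by
    calc (∏ f ∈ G, ph p f) * Q p (((↑S : Set α))ᶜ)
        = ∑ D ∈ S.powerset.filter (G ⊆ ·),
            ((∏ f ∈ D, ph p f) * ∏ f ∈ S \ D, qh p f) * Q p (((↑S : Set α))ᶜ) := by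
          rw [← Finset.sum_mul, key_fin hp G S hGS]
      _ ≤ ∑ D ∈ S.powerset.filter (G ⊆ ·), w p D := by
          refine Finset.sum_le_sum fun D hD => ?_
          rw [Finset.mem_filter, Finset.mem_powerset] at hD
          exact w_ge hp D S hD.1
      _ = ∑ D ∈ S.powerset.filter (G ⊆ ·),
            {D : Finset α | ∀ f ∈ G, f ∈ D}.indicator (w p) D := by
          refine Finset.sum_congr rfl fun D hD => ?_
          rw [Finset.mem_filter] at hD
          rw [Set.indicator_of_mem (by simpa [Finset.subset_iff] using hD.2)]
      _ ≤ L := ENNReal.sum_le_tsum _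
  calc ∏ f ∈ G, ph p f = (∏ f ∈ G, ph p f) * 1 := (mul_one _).symm
    _ ≤ (∏ f ∈ G, ph p f) * (Q p (((↑S : Set α))ᶜ) + ε) := mul_le_mul_right hQ _
    _ = (∏ f ∈ G, ph p f) * Q p (((↑S : Set α))ᶜ) + (∏ f ∈ G, ph p f) * ε := by ring
    _ ≤ L + 1 * ε := add_le_add hmain (mul_le_mul_left (prod_ph_le_one hp G) _)
    _ = L + ε := by rw [one_mul]

end Stmt10Aux

open Stmt10Aux

theorem stmt_10 {α : Type*} [Countable α] [MeasurableSpace (Finset α)]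
    [MeasurableSingletonClass (Finset α)]
    (p : α → ℝ) (hp : ∀ f, 0 ≤ p f ∧ p f ≤ 1) :
    (∃ μ : Measure (Finset α), IsProbabilityMeasure μ ∧
      ∀ G : Finset α,
        μ {D : Finset α | ∀ f ∈ G, f ∈ D} = ∏ f ∈ G, ENNReal.ofReal (p f))
    ↔ Summable p := by
  classical
  have meas : ∀ s : Set (Finset α), MeasurableSet s := fun s => (Set.to_countable s).measurableSet
  constructor
  · rintro ⟨μ, hprob, hμ⟩
    by_contra hns
    have htop : ∑' f, ph p f = ∞ := by
      by_contra h
      exact hns ((summable_iff_ne_top hp).2 h)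
    have mu_compl : ∀ H G : Finset α, Disjoint G H →
        μ {D : Finset α | (∀ f ∈ G, f ∈ D) ∧ (∀ f ∈ H, f ∉ D)}
          = (∏ f ∈ G, ph p f) * ∏ f ∈ H, (1 - ph p f) := by
      intro H
      induction H using Finset.induction_on with
      | empty =>
        intro G _
        have hs : {D : Finset α | (∀ f ∈ G, f ∈ D) ∧ (∀ f ∈ (∅:Finset α), f ∉ D)}
            = {D : Finset α | ∀ f ∈ G, f ∈ D} := by simp
        rw [hs, hμ G]
        simp [ph]
      | @insert a H ha ih =>
        intro G hdisj
        have haG : a ∉ G := fun h => (Finset.disjoint_left.1 hdisj h) (Finset.mem_insert_self a H)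
        have hGH : Disjoint G H := hdisj.mono_right (Finset.subset_insert a H)
        have hG'H : Disjoint (insert a G) H := by
          rw [Finset.disjoint_left]
          intro x hx hxH
          rcases Finset.mem_insert.1 hx with rfl | hxG
          · exact ha hxH
          · exact Finset.disjoint_left.1 hdisj hxG (Finset.mem_insert_of_mem hxH)
        have hBA : {D : Finset α | (∀ f ∈ insert a G, f ∈ D) ∧ (∀ f ∈ H, f ∉ D)}
            ⊆ {D : Finset α | (∀ f ∈ G, f ∈ D) ∧ (∀ f ∈ H, f ∉ D)} :=
          fun D hD => ⟨fun f hf => hD.1 f (Finset.mem_insert_of_mem hf), hD.2⟩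
        have hset : {D : Finset α | (∀ f ∈ G, f ∈ D) ∧ (∀ f ∈ insert a H, f ∉ D)}
            = {D : Finset α | (∀ f ∈ G, f ∈ D) ∧ (∀ f ∈ H, f ∉ D)}
              \ {D : Finset α | (∀ f ∈ insert a G, f ∈ D) ∧ (∀ f ∈ H, f ∉ D)} := by
          ext D
          simp only [Set.mem_setOf_eq, Set.mem_diff, Finset.mem_insert]
          constructor
          · rintro ⟨h1, h2⟩
            exact ⟨⟨h1, fun f hf => h2 f (Or.inr hf)⟩,
              fun hB => (h2 a (Or.inl rfl)) (hB.1 a (Or.inl rfl))⟩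
          · rintro ⟨⟨h1, h2⟩, h3⟩
            refine ⟨h1, fun f hf => ?_⟩
            rcases hf with rfl | hf
            · intro hfD
              exact h3 ⟨fun g hg => hg.elim (fun e => e ▸ hfD) (h1 g), h2⟩
            · exact h2 f hf
        have hPR : (∏ f ∈ G, ph p f) * ∏ f ∈ H, (1 - ph p f) ≠ ∞ := by
          refine (lt_of_le_of_lt (mul_le_mul' (prod_ph_le_one hp G)
            (Finset.prod_le_one (fun _ _ => zero_le) (fun f _ => tsub_le_self.trans le_rfl))) ?_).ne
          norm_num
        rw [hset, measure_diff hBA (meas _).nullMeasurableSet (measure_ne_top μ _),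
          ih G hGH, ih (insert a G) hG'H, Finset.prod_insert haG, Finset.prod_insert ha]
        have hsub := ENNReal.sub_mul
          (a := 1) (b := ph p a) (c := (∏ f ∈ G, ph p f) * ∏ f ∈ H, (1 - ph p f))
          (fun _ _ => hPR)
        calc (∏ f ∈ G, ph p f) * ∏ f ∈ H, (1 - ph p f)
              - (ph p a * ∏ f ∈ G, ph p f) * ∏ f ∈ H, (1 - ph p f)
            = 1 * ((∏ f ∈ G, ph p f) * ∏ f ∈ H, (1 - ph p f))
              - ph p a * ((∏ f ∈ G, ph p f) * ∏ f ∈ H, (1 - ph p f)) := by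
              rw [one_mul, mul_assoc]
          _ = (1 - ph p a) * ((∏ f ∈ G, ph p f) * ∏ f ∈ H, (1 - ph p f)) := hsub.symm
          _ = (∏ f ∈ G, ph p f) * ((1 - ph p a) * ∏ f ∈ H, (1 - ph p f)) :=
              mul_left_comm _ _ _
    have hsingle : ∀ D₀ : Finset α, μ {D₀} = 0 := by
      intro D₀
      have key : ∀ n : ℕ, μ {D₀} ≤ ENNReal.ofReal (Real.exp (-(n:ℝ))) := by
        intro n
        have hsup : (⨆ s : Finset α, ∑ f ∈ s, ph p f) = ∞ := by
          rw [← ENNReal.tsum_eq_iSup_sum, htop]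
        have hD0fin : ∑ f ∈ D₀, ph p f ≠ ∞ :=
          (ENNReal.sum_lt_top.2 fun f _ => ENNReal.ofReal_lt_top).ne
        obtain ⟨H₀, hH₀⟩ : ∃ H₀ : Finset α,
            (n:ℝ≥0∞) + ∑ f ∈ D₀, ph p f < ∑ f ∈ H₀, ph p f := by
          have hlt : ((n:ℝ≥0∞) + ∑ f ∈ D₀, ph p f) < ⨆ s : Finset α, ∑ f ∈ s, ph p f := by
            rw [hsup, lt_top_iff_ne_top]
            exact ENNReal.add_ne_top.2 ⟨ENNReal.natCast_ne_top n, hD0fin⟩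
          exact lt_iSup_iff.1 hlt
        have hsumH : (n:ℝ≥0∞) < ∑ f ∈ H₀ \ D₀, ph p f := by
          have hsub0 : H₀ ⊆ (H₀ \ D₀) ∪ D₀ := by
            rw [Finset.sdiff_union_self_eq_union]
            exact Finset.subset_union_left
          have h5 : ∑ f ∈ H₀, ph p f ≤ ∑ f ∈ H₀ \ D₀, ph p f + ∑ f ∈ D₀, ph p f := by
            rw [← Finset.sum_union Finset.sdiff_disjoint]
            exact Finset.sum_le_sum_of_subset hsub0
          exact (ENNReal.add_lt_add_iff_right hD0fin).1 (lt_of_lt_of_le hH₀ h5)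
        have hreal : (n:ℝ) < ∑ f ∈ H₀ \ D₀, p f := by
          rw [show ∑ f ∈ H₀ \ D₀, ph p f = ENNReal.ofReal (∑ f ∈ H₀ \ D₀, p f) from
            (ENNReal.ofReal_sum_of_nonneg fun f _ => (hp f).1).symm] at hsumH
          have h6 := (ENNReal.lt_ofReal_iff_toReal_lt (ENNReal.natCast_ne_top n)).1 hsumH
          simpa using h6
        have hDin : ({D₀} : Set (Finset α)) ⊆ {D : Finset α | ∀ f ∈ H₀ \ D₀, f ∉ D} := by
          intro D hD
          rw [Set.mem_singleton_iff] at hD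
          subst hD
          exact fun f hf => (Finset.mem_sdiff.1 hf).2
        have hcompl := mu_compl (H₀ \ D₀) ∅ (Finset.disjoint_empty_left _)
        have hsetq : {D : Finset α | (∀ f ∈ (∅:Finset α), f ∈ D) ∧ (∀ f ∈ H₀ \ D₀, f ∉ D)}
            = {D : Finset α | ∀ f ∈ H₀ \ D₀, f ∉ D} := by simp
        rw [hsetq] at hcompl
        have hq : ∏ f ∈ H₀ \ D₀, (1 - ph p f)
            = ENNReal.ofReal (∏ f ∈ H₀ \ D₀, (1 - p f)) := by
          rw [ENNReal.ofReal_prod_of_nonneg (fun f _ => by linarith [(hp f).2])]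
          refine Finset.prod_congr rfl fun f _ => ?_
          rw [ph, ENNReal.ofReal_sub _ (hp f).1, ENNReal.ofReal_one]
        have hprodle : ∏ f ∈ H₀ \ D₀, (1 - p f) ≤ Real.exp (-(n:ℝ)) := by
          have hneg : ∑ f ∈ H₀ \ D₀, -(p f) = -∑ f ∈ H₀ \ D₀, p f := by simp
          calc ∏ f ∈ H₀ \ D₀, (1 - p f)
              ≤ ∏ f ∈ H₀ \ D₀, Real.exp (-(p f)) :=
                Finset.prod_le_prod (fun f _ => by linarith [(hp f).2])
                  (fun f _ => by linarith [Real.add_one_le_exp (-(p f))])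
            _ = Real.exp (∑ f ∈ H₀ \ D₀, -(p f)) := (Real.exp_sum _ _).symm
            _ ≤ Real.exp (-(n:ℝ)) := by
                rw [Real.exp_le_exp, hneg]
                linarith
        calc μ {D₀} ≤ μ {D : Finset α | ∀ f ∈ H₀ \ D₀, f ∉ D} := measure_mono hDin
          _ = ∏ f ∈ H₀ \ D₀, (1 - ph p f) := by rw [hcompl]; simp
          _ = ENNReal.ofReal (∏ f ∈ H₀ \ D₀, (1 - p f)) := hq
          _ ≤ ENNReal.ofReal (Real.exp (-(n:ℝ))) := ENNReal.ofReal_le_ofReal hprodle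
      have htends : Filter.Tendsto (fun n : ℕ => ENNReal.ofReal (Real.exp (-(n:ℝ))))
          Filter.atTop (nhds 0) := by
        rw [← ENNReal.ofReal_zero]
        apply ENNReal.tendsto_ofReal
        exact Real.tendsto_exp_atBot.comp
          (Filter.tendsto_neg_atBot_iff.2 tendsto_natCast_atTop_atTop)
      exact le_antisymm (ge_of_tendsto' htends key) zero_le
    have h0 : μ Set.univ = 0 := by
      rw [← Measure.tsum_indicator_apply_singleton μ Set.univ MeasurableSet.univ]
      simp [hsingle]
    rw [measure_univ] at h0
    exact one_ne_zero h0
  · intro hs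
    refine ⟨Measure.sum (fun D => w p D • Measure.dirac D), ?_, ?_⟩
    all_goals
      have happ : ∀ s : Set (Finset α),
          (Measure.sum (fun D => w p D • Measure.dirac D)) s = ∑' D, s.indicator (w p) D := by
        intro s
        rw [Measure.sum_apply _ (meas s)]
        simp only [Measure.smul_apply, smul_eq_mul, Measure.dirac_apply, Set.indicator_apply,
          mul_ite, Pi.one_apply, mul_one, mul_zero]
    · constructor
      rw [happ]
      have h1 := tsum_w hp hs ∅
      simpa using h1
    · intro G
      rw [happ]
      exact tsum_w hp hs G
end

section
/- Let (Ω, 𝔄, P) be a probability space of finite subsets of a (possibly uncountable) fact set F, with all events E_f = {D : f ∈ D} measurable. Then the set of facts f with P(E_f) > 0 is countable. -/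
open MeasureTheory
open ENNReal

theorem stmt_12 {α : Type*} [MeasurableSpace (Finset α)]
    (μ : Measure (Finset α)) [IsProbabilityMeasure μ]
    (hmeas : ∀ f : α, MeasurableSet {D : Finset α | f ∈ D}) :
    Set.Countable {f : α | 0 < μ {D : Finset α | f ∈ D}} := by
  have key : ∀ k : ℕ, {f : α | ((k : ℝ≥0∞) + 1)⁻¹ ≤ μ {D : Finset α | f ∈ D}}.Finite := by
    intro k
    by_contra hinf
    rw [← Set.not_infinite, not_not] at hinf
    obtain u := hinf.natEmbedding _
    set s : ℕ → Set (Finset α) := fun i => {D : Finset α | (u i).1 ∈ D} with hs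
    set B : ℕ → Set (Finset α) := fun n => ⋃ i ∈ Set.Ici n, s i with hB
    have hmeasB : ∀ n, NullMeasurableSet (B n) μ := fun n =>
      (MeasurableSet.biUnion (Set.to_countable _) fun i _ => hmeas _).nullMeasurableSet
    have hanti : Antitone B := fun m n hmn =>
      Set.biUnion_subset_biUnion_left fun i hi => le_trans hmn hi
    have hempty : (⋂ n, B n) = ∅ := by
      rw [Set.eq_empty_iff_forall_notMem]
      intro D hD
      simp only [hB, hs, Set.mem_iInter, Set.mem_iUnion, Set.mem_Ici, Set.mem_setOf_eq,
        exists_prop] at hD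
      have huinj : Function.Injective (fun i => (u i).1) :=
        fun a b hab => u.injective (Subtype.ext hab)
      have hset : {i : ℕ | (u i).1 ∈ D}.Infinite := by
        apply Set.infinite_of_not_bddAbove
        rintro ⟨m, hm⟩
        obtain ⟨i, hi, hmem⟩ := hD (m + 1)
        have := hm hmem
        omega
      have himg : ((fun i => (u i).1) '' {i : ℕ | (u i).1 ∈ D}).Infinite :=
        hset.image (huinj.injOn)
      have hsub : ((fun i => (u i).1) '' {i : ℕ | (u i).1 ∈ D}) ⊆ ↑D := by
        rintro x ⟨i, hi, rfl⟩; exact hi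
      exact himg (D.finite_toSet.subset hsub)
    have htend := tendsto_measure_iInter_atTop (μ := μ) hmeasB hanti ⟨0, measure_ne_top μ _⟩
    rw [hempty, measure_empty] at htend
    have hge : ∀ n, ((k : ℝ≥0∞) + 1)⁻¹ ≤ μ (B n) := fun n =>
      le_trans (u n).2 (measure_mono (show s n ⊆ B n from Set.subset_biUnion_of_mem Set.self_mem_Ici))
    have hle : ((k : ℝ≥0∞) + 1)⁻¹ ≤ 0 := ge_of_tendsto htend (Filter.Eventually.of_forall hge)
    have : ((k : ℝ≥0∞) + 1)⁻¹ ≠ 0 := ENNReal.inv_ne_zero.2 (by simp)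
    exact this (le_antisymm hle zero_le)
  have hsub : {f : α | 0 < μ {D : Finset α | f ∈ D}} ⊆
      ⋃ k : ℕ, {f : α | ((k : ℝ≥0∞) + 1)⁻¹ ≤ μ {D : Finset α | f ∈ D}} := by
    intro f hf
    obtain ⟨k, hk⟩ := ENNReal.exists_inv_nat_lt (pos_iff_ne_zero.1 hf)
    refine Set.mem_iUnion.2 ⟨k, ?_⟩
    calc ((k : ℝ≥0∞) + 1)⁻¹ ≤ ((k : ℝ≥0∞))⁻¹ := ENNReal.inv_le_inv.2 le_self_add
      _ ≤ μ {D : Finset α | f ∈ D} := hk.le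
  exact (Set.countable_iUnion fun k => (key k).countable).mono hsub
end

section
/- Let F be a countable set partitioned into blocks (B_j)_{j∈J} and, for each j, a family (p_f)_{f∈B_j} of reals in [0,1] with ∑_{f∈B_j} p_f ≤ 1. If moreover ∑_{f∈F} p_f < ∞, then there exists a probability measure P on finite subsets of F such that: (1) with probability 1 the random set contains at most one fact from each block; (2) P({D : f ∈ D}) = p_f for all f; and (3) for facts f_1,…,f_k from pairwise distinct blocks, P(⋂_i {D : f_i ∈ D}) = ∏_i p_{f_i}. -/
open MeasureTheory
open scoped ENNReal

attribute [local instance] Classical.propDecidable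

namespace Stmt16Aux

noncomputable section

variable {α β : Type*} (b : α → β) (P : α → ℝ≥0∞) (e : ℕ → α)

def sB (j : β) : ℝ≥0∞ := ∑' f : {f : α // b f = j}, P f

def qB (j : β) : ℝ≥0∞ := 1 - sB b P j

def GG (n : ℕ) : Finset α := (Finset.range n).image e

def BB (n : ℕ) : Finset β := (GG e n).image b

def CC (D : Finset α) (n : ℕ) : ℝ≥0∞ := ∏ j ∈ BB b e n \ D.image b, qB b P j

def TT (n : ℕ) : ℝ≥0∞ := ⨅ m, ∏ j ∈ BB b e m \ BB b e n, qB b P j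

def uu (n : ℕ) (D : Finset α) : ℝ≥0∞ :=
  if Set.InjOn b ↑D ∧ ∀ f ∈ D, b f ∈ BB b e n then
    (∏ f ∈ D, P f) * CC b P e D n * TT b P e n else 0

def ww (D : Finset α) : ℝ≥0∞ := ⨆ n, uu b P e n D

lemma qB_le_one (j : β) : qB b P j ≤ 1 := tsub_le_self

lemma prod_qB_le_one (S : Finset β) : ∏ j ∈ S, qB b P j ≤ 1 :=
  Finset.prod_le_one (fun _ _ => zero_le) (fun j _ => qB_le_one b P j)

lemma prod_qB_ne_top (S : Finset β) : ∏ j ∈ S, qB b P j ≠ ∞ :=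
  ((prod_qB_le_one b P S).trans_lt ENNReal.one_lt_top).ne

lemma GG_mono : Monotone (GG e) := fun _ _ h =>
  Finset.image_subset_image (Finset.range_subset_range.2 h)

lemma BB_mono : Monotone (BB b e) := fun _ _ h =>
  Finset.image_subset_image (GG_mono e h)

lemma qB_add_sB (j : β) (h : sB b P j ≤ 1) : qB b P j + sB b P j = 1 :=
  tsub_add_cancel_of_le h

lemma prod_q_anti {S S' : Finset β} (h : S ⊆ S') :
    ∏ j ∈ S', qB b P j ≤ ∏ j ∈ S, qB b P j := by
  rw [← Finset.prod_sdiff h]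
  exact mul_le_of_le_one_left (zero_le) (prod_qB_le_one b P _)

lemma sdiff_union_split {X Y Z : Finset β} (hXY : X ⊆ Y) (hYZ : Y ⊆ Z) :
    Z \ X = (Y \ X) ∪ (Z \ Y) := by
  ext a
  simp only [Finset.mem_sdiff, Finset.mem_union]
  constructor
  · rintro ⟨haZ, haX⟩
    by_cases hY : a ∈ Y
    · exact Or.inl ⟨hY, haX⟩
    · exact Or.inr ⟨haZ, hY⟩
  · rintro (⟨haY, haX⟩ | ⟨haZ, haY⟩)
    · exact ⟨hYZ haY, haX⟩
    · exact ⟨haZ, fun hX => haY (hXY hX)⟩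

lemma prod_split {X Y Z : Finset β} (hXY : X ⊆ Y) (hYZ : Y ⊆ Z) :
    ∏ j ∈ Z \ X, qB b P j = (∏ j ∈ Y \ X, qB b P j) * ∏ j ∈ Z \ Y, qB b P j := by
  rw [sdiff_union_split hXY hYZ, Finset.prod_union]
  rw [Finset.disjoint_left]
  intro a ha ha'
  exact (Finset.mem_sdiff.1 ha').2 (Finset.mem_sdiff.1 ha).1

lemma iSup_shift {f : ℕ → ℝ≥0∞} (hf : Monotone f) (N : ℕ) :
    ⨆ n, f n = ⨆ n, f (N + n) :=
  le_antisymm (iSup_le fun n => (hf (Nat.le_add_left n N)).trans (le_iSup (fun n => f (N + n)) n))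
    (iSup_le fun n => le_iSup f (N + n))

lemma TT_le_one (n : ℕ) : TT b P e n ≤ 1 := by
  refine (iInf_le _ n).trans ?_
  simp

lemma TT_mono : Monotone (TT b P e) := by
  intro n n' h
  exact iInf_mono fun m => prod_q_anti b P
    (Finset.sdiff_subset_sdiff (Finset.Subset.refl _) (BB_mono b e h))


lemma TT_le_mul {n n' : ℕ} (h : n ≤ n') :
    TT b P e n ≤ (∏ j ∈ BB b e n' \ BB b e n, qB b P j) * TT b P e n' := by
  simp only [TT]
  rw [ENNReal.mul_iInf' (fun ht => absurd ht (prod_qB_ne_top b P _))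
    (fun _ => inferInstance)]
  refine le_iInf fun m => ?_
  refine (iInf_le (fun m => ∏ j ∈ BB b e m \ BB b e n, qB b P j) (max m n')).trans ?_
  rw [prod_split b P (BB_mono b e h) (BB_mono b e (le_max_right m n'))]
  exact mul_le_mul_right (prod_q_anti b P (Finset.sdiff_subset_sdiff
    (BB_mono b e (le_max_left m n')) (Finset.Subset.refl _))) _

lemma uu_mono (D : Finset α) : Monotone (fun n => uu b P e n D) := by
  intro n n' h
  simp only [uu]
  split_ifs with h1 h2
  · have himg : D.image b ⊆ BB b e n := by
      intro a ha
      obtain ⟨f, hf, rfl⟩ := Finset.mem_image.1 ha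
      exact h1.2 f hf
    have hCC : CC b P e D n' = CC b P e D n * ∏ j ∈ BB b e n' \ BB b e n, qB b P j := by
      unfold CC
      exact prod_split b P himg (BB_mono b e h)
    rw [hCC]
    calc (∏ f ∈ D, P f) * CC b P e D n * TT b P e n
        ≤ (∏ f ∈ D, P f) * CC b P e D n *
          ((∏ j ∈ BB b e n' \ BB b e n, qB b P j) * TT b P e n') :=
          mul_le_mul_right (TT_le_mul b P e h) _
      _ = (∏ f ∈ D, P f) * (CC b P e D n * ∏ j ∈ BB b e n' \ BB b e n, qB b P j) *
          TT b P e n' := by ring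
  · exact absurd ⟨h1.1, fun f hf => BB_mono b e h (h1.2 f hf)⟩ h2
  · exact zero_le
  · exact le_refl 0

lemma one_sub_sum_le_prod (S : Finset β) (g : β → ℝ≥0∞) (hg : ∀ j ∈ S, g j ≤ 1) :
    1 - ∑ j ∈ S, g j ≤ ∏ j ∈ S, (1 - g j) := by
  induction S using Finset.induction_on with
  | empty => simp
  | @insert j S hj ih =>
    rw [Finset.sum_insert hj, Finset.prod_insert hj, ← tsub_tsub]
    have hgj : g j ≤ 1 := hg j (Finset.mem_insert_self j S)
    calc 1 - g j - ∑ i ∈ S, g i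
        ≤ (1 - g j) - (1 - g j) * ∑ i ∈ S, g i :=
          tsub_le_tsub_left (mul_le_of_le_one_left (zero_le) tsub_le_self) _
      _ = (1 - g j) * (1 - ∑ i ∈ S, g i) := by
          rw [ENNReal.mul_sub (fun _ _ => (tsub_le_self.trans_lt ENNReal.one_lt_top).ne),
            mul_one]
      _ ≤ (1 - g j) * ∏ i ∈ S, (1 - g i) :=
          mul_le_mul_right (ih (fun i hi => hg i (Finset.mem_insert_of_mem hi))) _

def RR (n : ℕ) : ℝ≥0∞ := ∑' f : α, if f ∈ GG e n then 0 else P f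

lemma sB_eq (j : β) : sB b P j = ∑' f : α, if b f = j then P f else 0 := by
  have h : sB b P j = ∑' f : α, Set.indicator {f : α | b f = j} P f := tsum_subtype _ P
  rw [h]
  exact tsum_congr fun f => by simp [Set.indicator_apply]

lemma mem_BB_of_mem_GG {n : ℕ} {f : α} (hf : f ∈ GG e n) : b f ∈ BB b e n :=
  Finset.mem_image_of_mem b hf

lemma sum_sB_le (n : ℕ) (S : Finset β) (hS : ∀ j ∈ S, j ∉ BB b e n) :
    ∑ j ∈ S, sB b P j ≤ RR P e n := by
  have h0 : ∑ j ∈ S, sB b P j = ∑ j ∈ S, ∑' f : α, (if b f = j then P f else 0) :=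
    Finset.sum_congr rfl fun j _ => sB_eq b P j
  rw [h0, ← Summable.tsum_finsetSum (fun i _ => ENNReal.summable), RR]
  refine ENNReal.tsum_le_tsum fun f => ?_
  rw [Finset.sum_ite_eq S (b f) (fun _ => P f)]
  split_ifs with h1 h2
  · exact absurd (mem_BB_of_mem_GG b e h2) (hS _ h1)
  · exact le_rfl
  · exact le_rfl
  · exact zero_le

lemma one_sub_RR_le_TT (hbd : ∀ j, sB b P j ≤ 1) (n : ℕ) :
    1 - RR P e n ≤ TT b P e n := by
  refine le_iInf fun m => ?_
  calc 1 - RR P e n ≤ 1 - ∑ j ∈ BB b e m \ BB b e n, sB b P j :=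
        tsub_le_tsub_left (sum_sB_le b P e n _ fun j hj => (Finset.mem_sdiff.1 hj).2) _
    _ ≤ ∏ j ∈ BB b e m \ BB b e n, (1 - sB b P j) :=
        one_sub_sum_le_prod _ _ fun j _ => hbd j
    _ = ∏ j ∈ BB b e m \ BB b e n, qB b P j := rfl

lemma exists_GG_superset (he : Function.Surjective e) (F : Finset α) :
    ∃ n, F ⊆ GG e n := by
  classical
  refine ⟨(F.sup fun f => Nat.find (he f)) + 1, fun f hf => ?_⟩
  have h1 : e (Nat.find (he f)) = f := Nat.find_spec (he f)
  refine Finset.mem_image.2 ⟨Nat.find (he f), Finset.mem_range.2 ?_, h1⟩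
  have h2 : (fun f => Nat.find (he f)) f ≤ F.sup (fun f => Nat.find (he f)) :=
    Finset.le_sup (f := fun g => Nat.find (he g)) hf
  exact Nat.lt_succ_of_le h2

lemma RR_le_total (n : ℕ) : RR P e n ≤ ∑' f, P f :=
  ENNReal.tsum_le_tsum fun f => by split_ifs <;> simp

lemma RR_small (he : Function.Surjective e) (hPtop : ∑' f, P f ≠ ∞)
    {ε : ℝ≥0∞} (hε : 0 < ε) : ∃ n, RR P e n ≤ ε := by
  set t := ∑' f, P f with ht
  by_cases htε : t ≤ ε
  · exact ⟨0, (RR_le_total P e 0).trans htε⟩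
  push_neg at htε
  have ht0 : t ≠ 0 := fun h => by simp [h] at htε
  have h1 : t - ε < ⨆ s : Finset α, ∑ a ∈ s, P a := by
    rw [← ENNReal.tsum_eq_iSup_sum, ← ht]
    exact ENNReal.sub_lt_self hPtop ht0 hε.ne'
  obtain ⟨F, hF⟩ := lt_iSup_iff.1 h1
  obtain ⟨n, hn⟩ := exists_GG_superset e he F
  refine ⟨n, ?_⟩
  have h3 : ∑' x : (↑F : Set α), P x + ∑' x : ↑(↑F : Set α)ᶜ, P x = ∑' f, P f :=
    Summable.tsum_add_tsum_compl ENNReal.summable ENNReal.summable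
  have h4 : ∑' x : (↑F : Set α), P x = ∑ f ∈ F, P f := Finset.tsum_subtype F P
  have h5 : ∑' x : ↑(↑F : Set α)ᶜ, P ↑x = ∑' f : α, (if f ∈ F then 0 else P f) := by
    rw [tsum_subtype ((↑F : Set α)ᶜ) P]
    exact tsum_congr fun f => by
      by_cases h : f ∈ F <;> simp [Set.indicator_apply, h]
  have htail : ∑ f ∈ F, P f + ∑' f : α, (if f ∈ F then 0 else P f) = t := by
    rw [← h4, ← h5, ht]
    exact h3
  have hRn : RR P e n ≤ ∑' f : α, (if f ∈ F then 0 else P f) := by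
    refine ENNReal.tsum_le_tsum fun f => ?_
    split_ifs with h1 h2 h3
    · exact le_rfl
    · exact zero_le
    · exact absurd (hn h3) h1
    · exact le_rfl
  refine hRn.trans ?_
  by_contra hcon
  push_neg at hcon
  have hFne : ∑ f ∈ F, P f ≠ ∞ := by
    refine fun h => hPtop ?_
    have := ENNReal.sum_le_tsum (f := P) F
    rw [h] at this
    exact top_le_iff.1 this
  have : t < t := by
    calc t = ∑ f ∈ F, P f + ∑' f : α, (if f ∈ F then 0 else P f) := htail.symm
      _ > ∑ f ∈ F, P f + ε := by exact ENNReal.add_lt_add_left hFne hcon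
      _ ≥ (t - ε) + ε := add_le_add_left hF.le _
      _ = t := tsub_add_cancel_of_le htε.le
  exact absurd this (lt_irrefl t)
  
lemma iSup_TT (hbd : ∀ j, sB b P j ≤ 1) (he : Function.Surjective e)
    (hPtop : ∑' f, P f ≠ ∞) : ⨆ n, TT b P e n = 1 := by
  refine le_antisymm (iSup_le (TT_le_one b P e)) ?_
  refine ENNReal.le_of_forall_pos_le_add fun ε hε _ => ?_
  obtain ⟨n, hn⟩ := RR_small P e he hPtop (ε := ε) (by exact_mod_cast hε)
  calc (1 : ℝ≥0∞) ≤ (1 - RR P e n) + RR P e n := le_tsub_add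
    _ ≤ TT b P e n + ε := add_le_add (one_sub_RR_le_TT b P e hbd n) hn
    _ ≤ (⨆ n, TT b P e n) + ε := add_le_add_left (le_iSup _ n) _

lemma key_finite (hbd : ∀ j, sB b P j ≤ 1) (G : Finset α) (hG : Set.InjOn b ↑G)
    (K : Finset β) (hdisj : Disjoint (G.image b) K) :
    ∑' D : Finset α, (if G ⊆ D ∧ Set.InjOn b ↑D ∧ (∀ f ∈ D, b f ∈ G.image b ∪ K) then
      (∏ f ∈ D, P f) * ∏ j ∈ (G.image b ∪ K) \ D.image b, qB b P j else 0)
      = ∏ f ∈ G, P f := by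
  induction K using Finset.induction_on with
  | empty =>
    simp only [Finset.union_empty]
    rw [tsum_eq_single G]
    · rw [if_pos ⟨Finset.Subset.refl G, hG, fun f hf => Finset.mem_image_of_mem b hf⟩,
        Finset.sdiff_self, Finset.prod_empty, mul_one]
    · intro D hD
      rw [if_neg]
      rintro ⟨hGD, hinj, hbl⟩
      apply hD
      refine Finset.Subset.antisymm (fun f hf => ?_) hGD
      obtain ⟨g, hg, hbg⟩ := Finset.mem_image.1 (hbl f hf)
      have hfg : g = f := hinj (Finset.mem_coe.2 (hGD hg)) (Finset.mem_coe.2 hf) hbg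
      exact hfg ▸ hg
  | @insert j K hjK ih =>
    have hjG : j ∉ G.image b := fun h =>
      Finset.disjoint_left.1 hdisj h (Finset.mem_insert_self j K)
    have hdisj' : Disjoint (G.image b) K := (Finset.disjoint_insert_right.1 hdisj).2
    set J' := G.image b ∪ K with hJ'
    have hjJ' : j ∉ J' := by
      rw [hJ', Finset.mem_union]
      rintro (h | h)
      · exact hjG h
      · exact hjK h
    have hGJ' : ∀ f ∈ G, b f ∈ J' := fun f hf =>
      Finset.mem_union_left _ (Finset.mem_image_of_mem b hf)
    have hUnion : G.image b ∪ insert j K = insert j J' := by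
      rw [hJ', Finset.union_insert]
    set Fh : Finset α → ℝ≥0∞ := fun D' =>
      if G ⊆ D' ∧ Set.InjOn b ↑D' ∧ (∀ f ∈ D', b f ∈ J') then
        (∏ f ∈ D', P f) * ∏ j' ∈ J' \ D'.image b, qB b P j' else 0 with hFh
    have hIH : ∑' D' : Finset α, Fh D' = ∏ f ∈ G, P f := by
      rw [hFh]
      simp only [hJ']
      exact ih hdisj'
    have hFh_ne : ∀ D' : Finset α, Fh D' ≠ 0 →
        (G ⊆ D' ∧ Set.InjOn b ↑D' ∧ ∀ f ∈ D', b f ∈ J') := by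
      intro D' hne
      by_contra hc
      rw [hFh] at hne
      dsimp only at hne
      rw [if_neg hc] at hne
      exact hne rfl
    have hFh_pos : ∀ D' : Finset α, (G ⊆ D' ∧ Set.InjOn b ↑D' ∧ ∀ f ∈ D', b f ∈ J') →
        Fh D' = (∏ f ∈ D', P f) * ∏ j' ∈ J' \ D'.image b, qB b P j' := by
      intro D' hc
      rw [hFh]
      dsimp only
      rw [if_pos hc]
    have core_mem : ∀ (x : α), b x = j → ∀ D' : Finset α, (∀ f ∈ D', b f ∈ J') → x ∉ D' :=
      fun x hx D' hD' hmem => hjJ' (hx ▸ hD' x hmem)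
    have core_inj : ∀ (x : α), b x = j → ∀ D' : Finset α, Set.InjOn b ↑D' →
        (∀ f ∈ D', b f ∈ J') → Set.InjOn b ↑(insert x D') := by
      intro x hx D' hinj hbl
      intro f hf g hg hfg
      simp only [Finset.coe_insert, Set.mem_insert_iff, Finset.mem_coe] at hf hg
      rcases hf with rfl | hf
      · rcases hg with rfl | hg
        · rfl
        · have hgJ : b g ∈ J' := hbl g hg
          rw [← hfg, hx] at hgJ
          exact absurd hgJ hjJ'
      · rcases hg with rfl | hg
        · have hfJ : b f ∈ J' := hbl f hf
          rw [hfg, hx] at hfJ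
          exact absurd hfJ hjJ'
        · exact hinj (Finset.mem_coe.2 hf) (Finset.mem_coe.2 hg) hfg
    have core_sdiff : ∀ D' : Finset α, (∀ f ∈ D', b f ∈ J') → ∀ x : α, b x = j →
        (insert j J') \ ((insert x D').image b) = J' \ D'.image b := by
      intro D' hbl x hx
      rw [Finset.image_insert, hx]
      ext a
      simp only [Finset.mem_sdiff, Finset.mem_insert, not_or]
      constructor
      · rintro ⟨(rfl | haJ'), hna, hnb⟩
        · exact absurd rfl hna
        · exact ⟨haJ', hnb⟩
      · rintro ⟨haJ', hnb⟩
        exact ⟨Or.inr haJ', fun h => hjJ' (h ▸ haJ'), hnb⟩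
    set F1 : Finset α → ℝ≥0∞ := fun D =>
      if G ⊆ D ∧ Set.InjOn b ↑D ∧ (∀ f ∈ D, b f ∈ insert j J') ∧ ∃ x ∈ D, b x = j then
        (∏ f ∈ D, P f) * ∏ j' ∈ (insert j J') \ D.image b, qB b P j' else 0 with hF1
    have core_val : ∀ (x : α), b x = j → ∀ D' : Finset α,
        (G ⊆ D' ∧ Set.InjOn b ↑D' ∧ ∀ f ∈ D', b f ∈ J') →
        F1 (insert x D') = P x * Fh D' := by
      intro x hxj D' hc
      have hxD' : x ∉ D' := core_mem x hxj D' hc.2.2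
      rw [hF1]
      dsimp only
      rw [if_pos ⟨hc.1.trans (Finset.subset_insert x D'), core_inj x hxj D' hc.2.1 hc.2.2,
        fun f hf => by
          rcases Finset.mem_insert.1 hf with rfl | hf'
          · exact hxj ▸ Finset.mem_insert_self _ _
          · exact Finset.mem_insert_of_mem (hc.2.2 f hf'),
        ⟨x, Finset.mem_insert_self x D', hxj⟩⟩]
      rw [Finset.prod_insert hxD', core_sdiff D' hc.2.2 x hxj, hFh_pos D' hc, mul_assoc]
    -- splitting
    rw [hUnion]
    have hsplit : ∀ D : Finset α,
        (if G ⊆ D ∧ Set.InjOn b ↑D ∧ (∀ f ∈ D, b f ∈ insert j J') then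
          (∏ f ∈ D, P f) * ∏ j' ∈ (insert j J') \ D.image b, qB b P j' else 0)
        = qB b P j * Fh D + F1 D := by
      intro D
      by_cases hex : ∃ x ∈ D, b x = j
      · have h0 : Fh D = 0 := by
          rw [hFh]
          dsimp only
          rw [if_neg]
          rintro ⟨-, -, hbl⟩
          obtain ⟨x, hxD, hxj⟩ := hex
          exact hjJ' (hxj ▸ hbl x hxD)
        rw [h0, mul_zero, zero_add, hF1]
        dsimp only
        by_cases hc : G ⊆ D ∧ Set.InjOn b ↑D ∧ ∀ f ∈ D, b f ∈ insert j J'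
        · rw [if_pos hc, if_pos ⟨hc.1, hc.2.1, hc.2.2, hex⟩]
        · rw [if_neg hc, if_neg fun hh => hc ⟨hh.1, hh.2.1, hh.2.2.1⟩]
      · have h1 : F1 D = 0 := by
          rw [hF1]
          dsimp only
          exact if_neg fun hh => hex hh.2.2.2
        rw [h1, add_zero]
        by_cases hc : G ⊆ D ∧ Set.InjOn b ↑D ∧ ∀ f ∈ D, b f ∈ insert j J'
        · have hblJ' : ∀ f ∈ D, b f ∈ J' := fun f hf => by
            rcases Finset.mem_insert.1 (hc.2.2 f hf) with h | h
            · exact absurd ⟨f, hf, h⟩ hex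
            · exact h
          have hjD : j ∉ D.image b := fun h => by
            obtain ⟨x, hx, hbx⟩ := Finset.mem_image.1 h
            exact hex ⟨x, hx, hbx⟩
          have hsd : (insert j J') \ D.image b = insert j (J' \ D.image b) :=
            Finset.insert_sdiff_of_notMem _ hjD
          rw [if_pos hc, hFh_pos D ⟨hc.1, hc.2.1, hblJ'⟩, hsd,
            Finset.prod_insert (by simp [hjJ'])]
          ring
        · rw [if_neg hc, hFh]
          dsimp only
          rw [if_neg fun hh => hc ⟨hh.1, hh.2.1,
            fun f hf => Finset.mem_insert_of_mem (hh.2.2 f hf)⟩, mul_zero]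
    rw [tsum_congr hsplit, ENNReal.tsum_add, ENNReal.tsum_mul_left, hIH]
    -- now the F1 sum
    have hsum1 : ∑' D : Finset α, F1 D = sB b P j * ∏ f ∈ G, P f := by
      have hbij : ∑' D : Finset α, F1 D
          = ∑' z : {x : α // b x = j} × Finset α, P z.1.1 * Fh z.2 := by
        refine tsum_eq_tsum_of_ne_zero_bij
          (i := fun z => insert z.1.1.1 z.1.2) ?_ ?_ ?_
        · rintro ⟨⟨⟨x, hxj⟩, D₁⟩, hz₁⟩ ⟨⟨⟨y, hyj⟩, D₂⟩, hz₂⟩ hins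
          simp only [Function.mem_support] at hz₁ hz₂
          obtain ⟨hP₁, hF₁⟩ := mul_ne_zero_iff.1 hz₁
          obtain ⟨hP₂, hF₂⟩ := mul_ne_zero_iff.1 hz₂
          have hc₁ := hFh_ne D₁ hF₁
          have hc₂ := hFh_ne D₂ hF₂
          have hx₁ : x ∉ D₁ := core_mem x hxj D₁ hc₁.2.2
          have hy₂ : y ∉ D₂ := core_mem y hyj D₂ hc₂.2.2
          simp only at hins
          have hxy : x = y := by
            have hxmem : x ∈ insert y D₂ := by
              rw [← hins]; exact Finset.mem_insert_self x D₁
            rcases Finset.mem_insert.1 hxmem with h | h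
            · exact h
            · exact absurd (hxj ▸ hc₂.2.2 x h) hjJ'
          subst hxy
          have hD : D₁ = D₂ := by
            have := congrArg (fun s => Finset.erase s x) hins
            simpa [Finset.erase_insert hx₁, Finset.erase_insert hy₂] using this
          subst hD
          rfl
        · intro D hD
          simp only [Function.mem_support] at hD
          have hcond : G ⊆ D ∧ Set.InjOn b ↑D ∧ (∀ f ∈ D, b f ∈ insert j J')
              ∧ ∃ x ∈ D, b x = j := by
            by_contra hc
            rw [hF1] at hD
            dsimp only at hD
            rw [if_neg hc] at hD
            exact hD rfl
          obtain ⟨hGD, hinj, hbl, x, hxD, hxj⟩ := hcond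
          have hceq : D = insert x (D.erase x) := (Finset.insert_erase hxD).symm
          have hblD' : ∀ f ∈ D.erase x, b f ∈ J' := by
            intro f hf
            rcases Finset.mem_insert.1 (hbl f (Finset.mem_of_mem_erase hf)) with h | h
            · have : f = x := hinj (Finset.mem_coe.2 (Finset.mem_of_mem_erase hf))
                (Finset.mem_coe.2 hxD) (h.trans hxj.symm)
              exact absurd this (Finset.ne_of_mem_erase hf)
            · exact h
          have hGD' : G ⊆ D.erase x := by
            intro g hg
            refine Finset.mem_erase.2 ⟨fun hgx => ?_, hGD hg⟩
            have : b g ∈ J' := hGJ' g hg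
            rw [hgx, hxj] at this
            exact hjJ' this
          have hinjD' : Set.InjOn b ↑(D.erase x) :=
            hinj.mono (Finset.coe_subset.2 (Finset.erase_subset x D))
          have hcond' : G ⊆ D.erase x ∧ Set.InjOn b ↑(D.erase x) ∧
              ∀ f ∈ D.erase x, b f ∈ J' := ⟨hGD', hinjD', hblD'⟩
          have hval : F1 D = P x * Fh (D.erase x) := by
            conv_lhs => rw [hceq]
            exact core_val x hxj (D.erase x) hcond'
          refine ⟨⟨(⟨⟨x, hxj⟩, D.erase x⟩ : {x : α // b x = j} × Finset α), ?_⟩, ?_⟩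
          · simp only [Function.mem_support]
            rw [← hval]
            exact hD
          · simp only
            exact (Finset.insert_erase hxD)
        · rintro ⟨⟨⟨x, hxj⟩, D'⟩, hz⟩
          simp only [Function.mem_support] at hz
          obtain ⟨hP, hF⟩ := mul_ne_zero_iff.1 hz
          exact core_val x hxj D' (hFh_ne D' hF)
      rw [hbij, ENNReal.tsum_prod']
      have h2 : ∀ x : {x : α // b x = j},
          ∑' D' : Finset α, P x.1 * Fh D' = P x.1 * ∏ f ∈ G, P f := by
        intro x
        rw [ENNReal.tsum_mul_left, hIH]
      rw [tsum_congr h2, ENNReal.tsum_mul_right]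
      rfl
    rw [hsum1, ← add_mul, qB_add_sB b P j (hbd j), one_mul]

lemma tsum_iSup_mono {ι : Type*} (f : ℕ → ι → ℝ≥0∞) (hf : ∀ i, Monotone fun n => f n i) :
    ∑' i, ⨆ n, f n i = ⨆ n, ∑' i, f n i := by
  refine le_antisymm ?_ (iSup_le fun n => ENNReal.tsum_le_tsum fun i => le_iSup (fun n => f n i) n)
  rw [ENNReal.tsum_eq_iSup_sum]
  refine iSup_le fun s => ?_
  rw [ENNReal.finsetSum_iSup_of_monotone (fun i => hf i)]
  exact iSup_mono fun n => ENNReal.sum_le_tsum s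

lemma key' (hbd : ∀ j, sB b P j ≤ 1) (G : Finset α) (hG : Set.InjOn b ↑G)
    (J : Finset β) (hGJ : ∀ f ∈ G, b f ∈ J) :
    ∑' D : Finset α, (if G ⊆ D ∧ Set.InjOn b ↑D ∧ (∀ f ∈ D, b f ∈ J) then
      (∏ f ∈ D, P f) * ∏ j ∈ J \ D.image b, qB b P j else 0) = ∏ f ∈ G, P f := by
  have himg : G.image b ⊆ J := by
    intro a ha
    obtain ⟨f, hf, rfl⟩ := Finset.mem_image.1 ha
    exact hGJ f hf
  have h1 := key_finite b P hbd G hG (J \ G.image b) Finset.disjoint_sdiff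
  rwa [Finset.union_sdiff_of_subset himg] at h1

lemma tsum_uu (hbd : ∀ j, sB b P j ≤ 1) (G : Finset α) (hG : Set.InjOn b ↑G)
    (n : ℕ) (hGn : ∀ f ∈ G, b f ∈ BB b e n) :
    ∑' D : Finset α, (if G ⊆ D then uu b P e n D else 0)
      = (∏ f ∈ G, P f) * TT b P e n := by
  have hpt : ∀ D : Finset α, (if G ⊆ D then uu b P e n D else 0) =
      (if G ⊆ D ∧ Set.InjOn b ↑D ∧ (∀ f ∈ D, b f ∈ BB b e n) then
        (∏ f ∈ D, P f) * ∏ j ∈ BB b e n \ D.image b, qB b P j else 0) * TT b P e n := by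
    intro D
    rw [uu]
    by_cases h1 : G ⊆ D
    · rw [if_pos h1]
      by_cases h2 : Set.InjOn b ↑D ∧ ∀ f ∈ D, b f ∈ BB b e n
      · rw [if_pos h2, if_pos ⟨h1, h2.1, h2.2⟩, CC]
      · rw [if_neg h2, if_neg fun hh => h2 ⟨hh.2.1, hh.2.2⟩, zero_mul]
    · rw [if_neg h1, if_neg fun hh => h1 hh.1, zero_mul]
  rw [tsum_congr hpt, ENNReal.tsum_mul_right, key' b P hbd G hG (BB b e n) hGn]

lemma ite_uu_mono (G : Finset α) (D : Finset α) :
    Monotone fun n => (if G ⊆ D then uu b P e n D else 0) := by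
  intro m n h
  by_cases hGD : G ⊆ D
  · simp only [if_pos hGD]
    exact uu_mono b P e D h
  · simp [hGD]

lemma key (hbd : ∀ j, sB b P j ≤ 1) (he : Function.Surjective e)
    (hPtop : ∑' f, P f ≠ ∞) (G : Finset α) (hG : Set.InjOn b ↑G) :
    ∑' D : Finset α, (if G ⊆ D then ww b P e D else 0) = ∏ f ∈ G, P f := by
  have hpt : ∀ D : Finset α, (if G ⊆ D then ww b P e D else 0)
      = ⨆ n, (if G ⊆ D then uu b P e n D else 0) := by
    intro D
    by_cases h : G ⊆ D
    · simp only [if_pos h]; rfl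
    · simp [h]
  rw [tsum_congr hpt, tsum_iSup_mono _ (fun D => ite_uu_mono b P e G D)]
  obtain ⟨N, hN⟩ := exists_GG_superset e he G
  have hGN : ∀ m : ℕ, ∀ f ∈ G, b f ∈ BB b e (N + m) := fun m f hf =>
    BB_mono b e (Nat.le_add_right N m) (mem_BB_of_mem_GG b e (hN hf))
  have hmonoA : Monotone fun n => ∑' D : Finset α, (if G ⊆ D then uu b P e n D else 0) :=
    fun m n h => ENNReal.tsum_le_tsum fun D => ite_uu_mono b P e G D h
  rw [iSup_shift hmonoA N]
  calc ⨆ m, ∑' D : Finset α, (if G ⊆ D then uu b P e (N + m) D else 0)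
      = ⨆ m, (∏ f ∈ G, P f) * TT b P e (N + m) :=
        iSup_congr fun m => tsum_uu b P e hbd G hG (N + m) (hGN m)
    _ = (∏ f ∈ G, P f) * ⨆ m, TT b P e (N + m) := (ENNReal.mul_iSup _ _).symm
    _ = (∏ f ∈ G, P f) * ⨆ m, TT b P e m := by
        rw [← iSup_shift (TT_mono b P e) N]
    _ = ∏ f ∈ G, P f := by rw [iSup_TT b P e hbd he hPtop, mul_one]

lemma ww_eq_zero (D : Finset α) (h : ¬ Set.InjOn b ↑D) : ww b P e D = 0 := by
  have : ∀ n, uu b P e n D = 0 := fun n => if_neg (fun hh => h hh.1)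
  simp [ww, this]

end
end Stmt16Aux

theorem stmt_16 {α β : Type*} [Countable α] [MeasurableSpace (Finset α)]
    [MeasurableSingletonClass (Finset α)]
    (b : α → β) (p : α → ℝ) (hp : ∀ f, 0 ≤ p f ∧ p f ≤ 1)
    (hblock : ∀ j : β, ∑' f : {f : α // b f = j}, p f.1 ≤ 1)
    (hsum : Summable p) :
    ∃ μ : Measure (Finset α), IsProbabilityMeasure μ ∧
      μ {D : Finset α | ∀ f ∈ D, ∀ g ∈ D, b f = b g → f = g} = 1 ∧
      (∀ f : α, μ {D : Finset α | f ∈ D} = ENNReal.ofReal (p f)) ∧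
      ∀ G : Finset α, Set.InjOn b ↑G →
        μ {D : Finset α | ∀ f ∈ G, f ∈ D} = ∏ f ∈ G, ENNReal.ofReal (p f) := by
  rcases isEmpty_or_nonempty α with hE | hne
  · refine ⟨Measure.dirac ∅, by infer_instance, ?_, fun f => isEmptyElim f, ?_⟩
    · refine Measure.dirac_apply_of_mem ?_
      intro f hf
      exact isEmptyElim f
    · intro G hG
      have hGe : G = ∅ := Finset.eq_empty_of_forall_notMem fun x => isEmptyElim x
      subst hGe
      rw [Finset.prod_empty]
      refine Measure.dirac_apply_of_mem ?_
      intro f hf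
      exact absurd hf (Finset.notMem_empty f)
  · obtain ⟨e, he⟩ := exists_surjective_nat α
    set P : α → ℝ≥0∞ := fun f => ENNReal.ofReal (p f) with hP
    have hPtot : ∑' f, P f = ENNReal.ofReal (∑' f, p f) :=
      (ENNReal.ofReal_tsum_of_nonneg (fun f => (hp f).1) hsum).symm
    have hPtop : ∑' f, P f ≠ ∞ := by rw [hPtot]; exact ENNReal.ofReal_ne_top
    have hbd : ∀ j, Stmt16Aux.sB b P j ≤ 1 := by
      intro j
      have hsub : Summable fun f : {f : α // b f = j} => p f.1 := hsum.subtype _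
      have h1 : Stmt16Aux.sB b P j = ENNReal.ofReal (∑' f : {f : α // b f = j}, p f.1) := by
        rw [Stmt16Aux.sB, ENNReal.ofReal_tsum_of_nonneg (f := fun f : {f : α // b f = j} => p f.1) (fun f => (hp f.1).1) hsub]
      rw [h1]
      exact ENNReal.ofReal_le_one.2 (hblock j)
    have htot : ∑' D : Finset α, Stmt16Aux.ww b P e D = 1 := by
      have h0 := Stmt16Aux.key b P e hbd he hPtop ∅ (by simp)
      simpa [Finset.empty_subset] using h0
    set pmf : PMF (Finset α) := ⟨Stmt16Aux.ww b P e, ENNReal.summable.hasSum_iff.2 htot⟩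
      with hpmf
    have hcoe : ∀ D : Finset α, pmf D = Stmt16Aux.ww b P e D := fun D => rfl
    have hms : ∀ S : Set (Finset α), MeasurableSet S := fun S =>
      (Set.to_countable S).measurableSet
    have happ : ∀ S : Set (Finset α), pmf.toMeasure S = ∑' D, Set.indicator S (⇑pmf) D :=
      fun S => PMF.toMeasure_apply pmf (hms S)
    haveI hprob : IsProbabilityMeasure pmf.toMeasure := PMF.toMeasure.isProbabilityMeasure pmf
    refine ⟨pmf.toMeasure, hprob, ?_, ?_, ?_⟩
    · rw [← prob_compl_eq_zero_iff (hms _)]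
      rw [happ]
      have h1 : ∀ D : Finset α,
          Set.indicator {D : Finset α | ∀ f ∈ D, ∀ g ∈ D, b f = b g → f = g}ᶜ (⇑pmf) D = 0 := by
        intro D
        by_cases hD : D ∈ {D : Finset α | ∀ f ∈ D, ∀ g ∈ D, b f = b g → f = g}ᶜ
        · rw [Set.indicator_of_mem hD, hcoe]
          refine Stmt16Aux.ww_eq_zero b P e D fun hinj => ?_
          exact hD fun f hf g hg hfg => hinj (Finset.mem_coe.2 hf) (Finset.mem_coe.2 hg) hfg
        · exact Set.indicator_of_notMem hD _
      rw [tsum_congr h1]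
      exact tsum_zero
    · intro f
      rw [happ]
      have h1 : ∀ D : Finset α, Set.indicator {D : Finset α | f ∈ D} (⇑pmf) D
          = (if ({f} : Finset α) ⊆ D then Stmt16Aux.ww b P e D else 0) := by
        intro D
        by_cases hD : f ∈ D
        · have hmem : D ∈ {D : Finset α | f ∈ D} := hD
          rw [Set.indicator_of_mem hmem, if_pos (Finset.singleton_subset_iff.2 hD), hcoe]
        · have hmem : D ∉ {D : Finset α | f ∈ D} := hD
          rw [Set.indicator_of_notMem hmem,
            if_neg fun h => hD (Finset.singleton_subset_iff.1 h)]
      rw [tsum_congr h1, Stmt16Aux.key b P e hbd he hPtop {f} (by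
        rw [Finset.coe_singleton]; exact Set.subsingleton_singleton.injOn b),
        Finset.prod_singleton]
    · intro G hG
      rw [happ]
      have h1 : ∀ D : Finset α, Set.indicator {D : Finset α | ∀ f ∈ G, f ∈ D} (⇑pmf) D
          = (if G ⊆ D then Stmt16Aux.ww b P e D else 0) := by
        intro D
        by_cases hD : G ⊆ D
        · have hmem : D ∈ {D : Finset α | ∀ f ∈ G, f ∈ D} := fun f hf => hD hf
          rw [Set.indicator_of_mem hmem, if_pos hD, hcoe]
        · have hmem : D ∉ {D : Finset α | ∀ f ∈ G, f ∈ D} := fun hmem => hD fun f hf => hmem f hf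
          rw [if_neg hD, Set.indicator_of_notMem hmem]
      rw [tsum_congr h1, Stmt16Aux.key b P e hbd he hPtop G hG]
end
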